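/- arXiv:math-ph/0303063 — 13 statements merged into one kernel-verified Lean document; each statement's English description precedes it below -/
import Mathlib

section
/- (Second trace identity for ellipsoidal coordinates) Let N ≥ 1, γ₁ < ⋯ < γ_N real, ν₁,…,ν_N > 0, Υ(λ) = Σ_{k=1}^{N} ν_k/(γ_k − λ), and let C ≠ 0 be real. If χ₁ < ⋯ < χ_N are the N real solutions of Υ(λ) = C, then C² · Σ_{k=1}^{N} (γ_k² − χ_k²) = 2 s₁ C − s₀², where s₀ = Σ_{k=1}^{N} ν_k and s₁ = Σ_{k=1}^{N} ν_k γ_k. -/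
open Polynomial Finset in
lemma aux_coeff_top {ι : Type*} [DecidableEq ι] (s : Finset ι) (f : ι → ℝ) :
    (∏ i ∈ s, (X - Polynomial.C (f i))).coeff s.card = 1 := by
  have hm : (∏ i ∈ s, (X - Polynomial.C (f i))).Monic :=
    monic_prod_of_monic _ _ fun i _ => monic_X_sub_C _
  have hd : (∏ i ∈ s, (X - Polynomial.C (f i))).natDegree = s.card := by
    rw [Polynomial.natDegree_prod_of_monic]
    · simp
    · intro i _; exact monic_X_sub_C _
  rw [← hd]; exact hm.coeff_natDegree

open Polynomial Finset in
lemma aux_coeff_e2 {ι : Type*} [DecidableEq ι] (s : Finset ι) (f : ι → ℝ) :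
    ∀ (n : ℕ), s.card = n + 2 →
    (∏ i ∈ s, (X - Polynomial.C (f i))).coeff n
      = ((∑ i ∈ s, f i) ^ 2 - ∑ i ∈ s, f i ^ 2) / 2 := by
  induction s using Finset.cons_induction with
  | empty => intro n h; simp at h
  | cons a t ha ih =>
    intro n hcard
    rw [Finset.card_cons] at hcard
    rw [Finset.prod_cons, sub_mul, Polynomial.coeff_sub, coeff_C_mul]
    rcases n with _ | m
    · obtain ⟨b, rfl⟩ := Finset.card_eq_one.mp (by omega : t.card = 1)
      have hab : a ≠ b := by simpa using ha
      simp only [Finset.prod_singleton, coeff_X_mul]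
      rw [Finset.sum_cons, Finset.sum_cons, Finset.sum_singleton, Finset.sum_singleton]
      simp [coeff_X_mul]
      ring
    · have ht : t.card = m + 2 := by omega
      have h1 : (∏ i ∈ t, (X - Polynomial.C (f i))).coeff (m + 1) = -∑ i ∈ t, f i := by
        have := Polynomial.prod_X_sub_C_coeff_card_pred t f (by omega)
        rwa [ht] at this
      rw [coeff_X_mul, ih m ht, h1, Finset.sum_cons, Finset.sum_cons]
      ring

/-- Second trace identity for ellipsoidal coordinates:
if `χ₁ < ⋯ < χ_N` are the `N` real solutions of `∑ ν_k/(γ_k - λ) = C` with `C ≠ 0`,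
then `C² · ∑ (γ_k² - χ_k²) = 2 s₁ C - s₀²` where `s₀ = ∑ ν_k`, `s₁ = ∑ ν_k γ_k`. -/
theorem stmt_2 (N : ℕ) (hN : 1 ≤ N) (γ ν : Fin N → ℝ)
    (hγ : StrictMono γ) (hν : ∀ k, 0 < ν k)
    (C : ℝ) (hC : C ≠ 0) (χ : Fin N → ℝ) (hχ : StrictMono χ)
    (hne : ∀ j k, χ j ≠ γ k)
    (hroot : ∀ j, ∑ k, ν k / (γ k - χ j) = C) :
    C ^ 2 * ∑ k, (γ k ^ 2 - χ k ^ 2)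
      = 2 * (∑ k, ν k * γ k) * C - (∑ k, ν k) ^ 2 := by
  classical
  have hnz : ∀ j k, γ k - χ j ≠ 0 := fun j k => sub_ne_zero.mpr (Ne.symm (hne j k))
  -- case N = 1
  rcases Nat.lt_or_ge N 2 with hN1 | hN2
  · interval_cases N
    have h0 := hroot 0
    simp only [Fin.sum_univ_one] at h0 ⊢
    have h := hnz 0 0
    field_simp at h0
    linear_combination (ν 0 + C * (γ 0 - χ 0) - 2 * C * γ 0) * h0
  -- case N ≥ 2
  obtain ⟨M, hM⟩ : ∃ M, N = M + 2 := ⟨N - 2, by omega⟩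
  set G : Polynomial ℝ := ∏ k, (Polynomial.X - Polynomial.C (γ k)) with hG
  set H : Polynomial ℝ := ∏ k, (Polynomial.X - Polynomial.C (χ k)) with hH
  set Gk : Fin N → Polynomial ℝ :=
    fun k => ∏ i ∈ Finset.univ.erase k, (Polynomial.X - Polynomial.C (γ i)) with hGk
  have hcardu : (Finset.univ : Finset (Fin N)).card = N := by simp
  have hcarde : ∀ k : Fin N, (Finset.univ.erase k).card = N - 1 := by
    intro k; rw [Finset.card_erase_of_mem (Finset.mem_univ k), hcardu]
  set D : Polynomial ℝ := Polynomial.C C * (G - H) + ∑ k, Polynomial.C (ν k) * Gk k with hD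
  -- key evaluation identity
  have key : ∀ j, C * ∏ i, (χ j - γ i)
      + ∑ k, ν k * ∏ i ∈ Finset.univ.erase k, (χ j - γ i) = 0 := by
    intro j
    have hterm : ∀ k : Fin N, ν k * ∏ i ∈ Finset.univ.erase k, (χ j - γ i)
        = -(ν k / (γ k - χ j)) * ∏ i, (χ j - γ i) := by
      intro k
      rw [← Finset.mul_prod_erase Finset.univ _ (Finset.mem_univ k)]
      have h := hnz j k
      field_simp
      ring
    have hsum : ∑ k, ν k * ∏ i ∈ Finset.univ.erase k, (χ j - γ i)
        = -C * ∏ i, (χ j - γ i) := by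
      rw [Finset.sum_congr rfl fun k _ => hterm k, ← Finset.sum_mul]
      congr 1
      rw [← neg_eq_iff_eq_neg] at *
      rw [← Finset.sum_neg_distrib] at *
      simp only [neg_neg]
      exact hroot j
    rw [hsum]; ring
  -- D vanishes at each χ j
  have hDeval : ∀ j, Polynomial.eval (χ j) D = 0 := by
    intro j
    have hHj : Polynomial.eval (χ j) H = 0 := by
      rw [hH, Polynomial.eval_prod]
      exact Finset.prod_eq_zero (Finset.mem_univ j) (by simp)
    rw [hD, Polynomial.eval_add, Polynomial.eval_mul, Polynomial.eval_sub, Polynomial.eval_C,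
      hHj, sub_zero, Polynomial.eval_finset_sum]
    simp only [Polynomial.eval_mul, Polynomial.eval_C, hG, hGk, Polynomial.eval_prod,
      Polynomial.eval_sub, Polynomial.eval_X]
    exact key j
  -- degrees
  have hGmonic : G.Monic := Polynomial.monic_prod_of_monic _ _ fun i _ => Polynomial.monic_X_sub_C _
  have hHmonic : H.Monic := Polynomial.monic_prod_of_monic _ _ fun i _ => Polynomial.monic_X_sub_C _
  have hGdeg : G.natDegree = N := by
    rw [hG, Polynomial.natDegree_prod_of_monic _ _ fun i _ => Polynomial.monic_X_sub_C _]; simp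
  have hHdeg : H.natDegree = N := by
    rw [hH, Polynomial.natDegree_prod_of_monic _ _ fun i _ => Polynomial.monic_X_sub_C _]; simp
  have hGdeg' : G.degree = (N : ℕ) := by
    rw [Polynomial.degree_eq_natDegree hGmonic.ne_zero, hGdeg]
  have hHdeg' : H.degree = (N : ℕ) := by
    rw [Polynomial.degree_eq_natDegree hHmonic.ne_zero, hHdeg]
  have hGkdeg : ∀ k, (Gk k).degree = ((N - 1 : ℕ) : WithBot ℕ) := by
    intro k
    have hm : (Gk k).Monic := Polynomial.monic_prod_of_monic _ _ fun i _ => Polynomial.monic_X_sub_C _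
    have : (Gk k).natDegree = N - 1 := by
      rw [hGk, Polynomial.natDegree_prod_of_monic _ _ fun i _ => Polynomial.monic_X_sub_C _]
      simp [hcarde]
    rw [Polynomial.degree_eq_natDegree hm.ne_zero, this]
  have hDdeg : D.degree < (N : ℕ) := by
    rw [hD]
    apply lt_of_le_of_lt (Polynomial.degree_add_le _ _)
    apply max_lt
    · rw [Polynomial.degree_C_mul hC]
      rcases eq_or_ne G H with h | h
      · rw [h, sub_self, Polynomial.degree_zero]
        exact WithBot.bot_lt_coe _
      · have hdd : G.degree = H.degree := by rw [hGdeg', hHdeg']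
        have hll : G.leadingCoeff = H.leadingCoeff := by
          rw [hGmonic.leadingCoeff, hHmonic.leadingCoeff]
        have := Polynomial.degree_sub_lt hdd hGmonic.ne_zero hll
        rwa [hGdeg'] at this
    · apply lt_of_le_of_lt (Polynomial.degree_sum_le _ _)
      apply Finset.sup_lt_iff (by exact WithBot.bot_lt_coe _) |>.mpr
      intro k _
      rw [Polynomial.degree_C_mul (ne_of_gt (hν k)), hGkdeg k]
      exact_mod_cast (show N - 1 < N by omega)
  -- D = 0
  have hD0 : D = 0 := by
    rcases eq_or_ne D 0 with h | h
    · exact h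
    · exact Polynomial.eq_zero_of_natDegree_lt_card_of_eval_eq_zero D hχ.injective hDeval
        (by rw [Fintype.card_fin]; exact (Polynomial.natDegree_lt_iff_degree_lt h).mpr hDdeg)
  -- coefficient extraction
  have hcoeff : ∀ n, C * (G.coeff n - H.coeff n) + ∑ k, ν k * (Gk k).coeff n = 0 := by
    intro n
    have h := congrArg (fun p => Polynomial.coeff p n) hD0
    rw [hD] at h
    simpa [Polynomial.coeff_add, Polynomial.coeff_sub, Polynomial.coeff_C_mul,
      Polynomial.finset_sum_coeff] using h
  -- coefficient values
  have hNsub1 : N - 1 = M + 1 := by omega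
  have hGc1 : G.coeff (M + 1) = -∑ i, γ i := by
    have h := Polynomial.prod_X_sub_C_coeff_card_pred (Finset.univ : Finset (Fin N)) γ
      (by rw [hcardu]; omega)
    rw [hcardu, hNsub1] at h
    rw [hG]; exact h
  have hHc1 : H.coeff (M + 1) = -∑ i, χ i := by
    have h := Polynomial.prod_X_sub_C_coeff_card_pred (Finset.univ : Finset (Fin N)) χ
      (by rw [hcardu]; omega)
    rw [hcardu, hNsub1] at h
    rw [hH]; exact h
  have hGkc1 : ∀ k, (Gk k).coeff (M + 1) = 1 := by
    intro k
    have h := aux_coeff_top (Finset.univ.erase k) γ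
    rw [hcarde, hNsub1] at h
    rw [hGk]; exact h
  have hGkc0 : ∀ k, (Gk k).coeff M = -((∑ i, γ i) - γ k) := by
    intro k
    have h := Polynomial.prod_X_sub_C_coeff_card_pred (Finset.univ.erase k) γ
      (by rw [hcarde]; omega)
    rw [hcarde, hNsub1] at h
    simp only [Nat.add_sub_cancel] at h
    rw [hGk, h, Finset.sum_erase_eq_sub (Finset.mem_univ k)]
  have hGc0 : G.coeff M = ((∑ i, γ i) ^ 2 - ∑ i, γ i ^ 2) / 2 := by
    have h := aux_coeff_e2 (Finset.univ : Finset (Fin N)) γ M (by rw [hcardu]; omega)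
    rw [hG]; exact h
  have hHc0 : H.coeff M = ((∑ i, χ i) ^ 2 - ∑ i, χ i ^ 2) / 2 := by
    have h := aux_coeff_e2 (Finset.univ : Finset (Fin N)) χ M (by rw [hcardu]; omega)
    rw [hH]; exact h
  -- the two trace equations
  have E1 : C * ((-∑ i, γ i) - (-∑ i, χ i)) + ∑ k, ν k = 0 := by
    have h := hcoeff (M + 1)
    rw [hGc1, hHc1] at h
    simpa [hGkc1] using h
  have E2 : C * (((∑ i, γ i) ^ 2 - ∑ i, γ i ^ 2) / 2 - ((∑ i, χ i) ^ 2 - ∑ i, χ i ^ 2) / 2)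
      + ((∑ k, ν k * γ k) - (∑ k, ν k) * (∑ i, γ i)) = 0 := by
    have h := hcoeff M
    rw [hGc0, hHc0] at h
    have hsum : ∑ k, ν k * (Gk k).coeff M
        = (∑ k, ν k * γ k) - (∑ k, ν k) * (∑ i, γ i) := by
      rw [Finset.sum_congr rfl fun k _ => by rw [hGkc0 k]]
      have hterm : ∀ k : Fin N, ν k * -((∑ i, γ i) - γ k)
          = ν k * γ k - ν k * (∑ i, γ i) := fun k => by ring
      rw [Finset.sum_congr rfl fun k _ => hterm k, Finset.sum_sub_distrib, ← Finset.sum_mul]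
    rw [hsum] at h
    exact h
  -- conclude
  rw [Finset.sum_sub_distrib]
  linear_combination ((∑ k, ν k) - C * (∑ i, γ i) - C * (∑ i, χ i)) * E1 + (-2 * C) * E2
end

section
/- (Converse for finite Jacobi ellipsoidal coordinates) Let N ≥ 1 and let γ₁ < ⋯ < γ_N be fixed real numbers. Let C > 0 and let χ₁ < ⋯ < χ_N be real numbers satisfying the interlacing χ₁ < γ₁ < χ₂ < γ₂ < ⋯ < χ_N < γ_N (respectively, let C < 0 and γ₁ < χ₁ < γ₂ < ⋯ < γ_N < χ_N). Then there exists a unique vector (ν₁,…,ν_N) with all ν_k > 0 such that Σ_{k=1}^{N} ν_k/(γ_k − χ_j) = C for every j = 1,…,N. -/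
open Polynomial Finset

namespace Stmt3Aux

variable {N : ℕ}

/-- The numerator polynomial `∑ k, ν k * ∏_{l ≠ k} (X - γ l)`. -/
noncomputable def Pnu (γ ν : Fin N → ℝ) : Polynomial ℝ :=
  ∑ k, Polynomial.C (ν k) * ∏ l ∈ Finset.univ.erase k, (X - Polynomial.C (γ l))

lemma natDegree_Pnu_lt (hN : 1 ≤ N) (γ ν : Fin N → ℝ) : (Pnu γ ν).natDegree < N := by
  have h : ∀ k ∈ (Finset.univ : Finset (Fin N)),
      (Polynomial.C (ν k) * ∏ l ∈ Finset.univ.erase k,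
        (X - Polynomial.C (γ l))).natDegree ≤ N - 1 := by
    intro k _
    refine le_trans (natDegree_C_mul_le _ _) (le_trans (natDegree_prod_le _ _) ?_)
    have : ∀ l ∈ Finset.univ.erase k, (X - Polynomial.C (γ l)).natDegree = 1 :=
      fun l _ => natDegree_X_sub_C _
    rw [Finset.sum_congr rfl this, Finset.sum_const, Finset.card_erase_of_mem (mem_univ k)]
    simp
  have := natDegree_sum_le_of_forall_le _ _ h
  calc (Pnu γ ν).natDegree ≤ N - 1 := this
  _ < N := by omega

lemma eval_Pnu (γ ν : Fin N → ℝ) (x : ℝ) :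
    (Pnu γ ν).eval x = ∑ k, ν k * ∏ l ∈ Finset.univ.erase k, (x - γ l) := by
  simp [Pnu, eval_finset_sum, eval_prod]

lemma eval_Pnu_gamma (γ : Fin N → ℝ) (hγ : Function.Injective γ) (ν : Fin N → ℝ) (k : Fin N) :
    (Pnu γ ν).eval (γ k) = ν k * ∏ l ∈ Finset.univ.erase k, (γ k - γ l) := by
  rw [eval_Pnu, Finset.sum_eq_single k]
  · intro b _ hb
    refine mul_eq_zero_of_right _ (Finset.prod_eq_zero (Finset.mem_erase.mpr ⟨hb.symm, mem_univ k⟩) ?_)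
    simp
  · simp

lemma eval_Pnu_chi (γ ν : Fin N → ℝ) (x : ℝ) (hne : ∀ l, γ l ≠ x) :
    (Pnu γ ν).eval x = -(∏ l, (x - γ l)) * ∑ k, ν k / (γ k - x) := by
  rw [eval_Pnu, Finset.mul_sum]
  refine Finset.sum_congr rfl fun k _ => ?_
  have hk : x - γ k ≠ 0 := sub_ne_zero.mpr fun h => hne k h.symm
  have hk' : γ k - x ≠ 0 := sub_ne_zero.mpr (hne k)
  have hprod : (∏ l ∈ Finset.univ.erase k, (x - γ l)) = (∏ l, (x - γ l)) / (x - γ k) := by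
    rw [eq_div_iff hk, Finset.prod_erase_mul _ _ (mem_univ k)]
  rw [hprod]
  field_simp
  ring

lemma uniq (hN : 1 ≤ N) (γ χ : Fin N → ℝ) (hγ : Function.Injective γ)
    (hχ : Function.Injective χ) (hne : ∀ k j, γ k ≠ χ j) (ν ν' : Fin N → ℝ)
    (h : ∀ j, ∑ k, ν k / (γ k - χ j) = ∑ k, ν' k / (γ k - χ j)) : ν = ν' := by
  have key : Pnu γ (ν - ν') = 0 := by
    refine eq_zero_of_natDegree_lt_card_of_eval_eq_zero _ hχ (fun j => ?_) ?_
    · rw [eval_Pnu_chi γ _ _ (fun l => hne l j)]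
      have h0 : ∑ k, (ν - ν') k / (γ k - χ j) = 0 := by
        simp only [Pi.sub_apply, sub_div, Finset.sum_sub_distrib, h j, sub_self]
      rw [h0, mul_zero]
    · simpa using natDegree_Pnu_lt hN γ (ν - ν')
  funext k
  have h2 : (ν - ν') k * ∏ l ∈ Finset.univ.erase k, (γ k - γ l) = 0 := by
    rw [← eval_Pnu_gamma γ hγ (ν - ν') k, key, eval_zero]
  have hd : (∏ l ∈ Finset.univ.erase k, (γ k - γ l)) ≠ 0 :=
    Finset.prod_ne_zero_iff.mpr fun l hl =>
      sub_ne_zero.mpr fun he => (Finset.mem_erase.mp hl).1 (hγ he).symm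
  have h3 : (ν - ν') k = 0 := by
    rcases mul_eq_zero.mp h2 with h | h
    · exact h
    · exact absurd h hd
  have : ν k - ν' k = 0 := h3
  linarith

lemma exists_formula (hN : 1 ≤ N) (γ χ : Fin N → ℝ) (hγ : Function.Injective γ)
    (hχ : Function.Injective χ) (hne : ∀ k j, γ k ≠ χ j) (C : ℝ) :
    ∃ ν : Fin N → ℝ, (∀ j, ∑ k, ν k / (γ k - χ j) = C) ∧
      ∀ k, ν k = C * (∏ j, (γ k - χ j)) / ∏ l ∈ Finset.univ.erase k, (γ k - γ l) := by
  let L : (Fin N → ℝ) →ₗ[ℝ] (Fin N → ℝ) :=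
    { toFun := fun ν j => ∑ k, ν k / (γ k - χ j)
      map_add' := by intro a b; funext j; simp [add_div, Finset.sum_add_distrib]
      map_smul' := by
        intro c a; funext j
        simp [Finset.mul_sum, mul_div_assoc, smul_eq_mul]
    }
  have hinj : Function.Injective L := fun a b hab =>
    uniq hN γ χ hγ hχ hne a b fun j => congrFun hab j
  obtain ⟨ν, hν⟩ := LinearMap.injective_iff_surjective.mp hinj (fun _ => C)
  have hsum : ∀ j, ∑ k, ν k / (γ k - χ j) = C := fun j => congrFun hν j
  refine ⟨ν, hsum, fun k => ?_⟩
  set M : Polynomial ℝ := ∏ l, (X - Polynomial.C (γ l)) with hM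
  set M' : Polynomial ℝ := ∏ j, (X - Polynomial.C (χ j)) with hM'
  have hMmonic : M.Monic := monic_prod_of_monic _ _ fun l _ => monic_X_sub_C _
  have hM'monic : M'.Monic := monic_prod_of_monic _ _ fun l _ => monic_X_sub_C _
  have hMdeg : M.natDegree = N := by
    rw [hM, natDegree_prod _ _ fun l _ => X_sub_C_ne_zero _]
    simp
  have hM'deg : M'.natDegree = N := by
    rw [hM', natDegree_prod _ _ fun l _ => X_sub_C_ne_zero _]
    simp
  set D := Pnu γ ν + Polynomial.C C * (M - M') with hD
  have hsub : (M - M').natDegree < N := by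
    by_cases h0 : M - M' = 0
    · rw [h0]; simpa using (show 0 < N by omega)
    · have hdlt : (M - M').degree < M.degree :=
        degree_sub_lt
          (by rw [degree_eq_natDegree hMmonic.ne_zero, degree_eq_natDegree hM'monic.ne_zero,
                hMdeg, hM'deg])
          hMmonic.ne_zero (by rw [hMmonic.leadingCoeff, hM'monic.leadingCoeff])
      have := natDegree_lt_natDegree h0 hdlt
      rwa [hMdeg] at this
  have hDdeg : D.natDegree < N := by
    refine lt_of_le_of_lt (natDegree_add_le _ _) (max_lt (natDegree_Pnu_lt hN γ ν) ?_)
    exact lt_of_le_of_lt (natDegree_C_mul_le _ _) hsub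
  have hMeval : ∀ x : ℝ, M.eval x = ∏ l, (x - γ l) := by intro x; simp [hM, eval_prod]
  have hM'eval : ∀ x : ℝ, M'.eval x = ∏ j, (x - χ j) := by intro x; simp [hM', eval_prod]
  have hDroots : ∀ j, D.eval (χ j) = 0 := by
    intro j
    have e1 : (Pnu γ ν).eval (χ j) = -(∏ l, (χ j - γ l)) * C := by
      rw [eval_Pnu_chi γ ν (χ j) (fun l => hne l j), hsum j]
    have e2 : M'.eval (χ j) = 0 := by
      rw [hM'eval]
      exact Finset.prod_eq_zero (mem_univ j) (by simp)
    simp only [hD, eval_add, eval_mul, eval_C, eval_sub, e1, e2, hMeval]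
    ring
  have hD0 : D = 0 :=
    eq_zero_of_natDegree_lt_card_of_eval_eq_zero D hχ hDroots (by simpa using hDdeg)
  have hev := congrArg (Polynomial.eval (γ k)) hD0
  have e3 : M.eval (γ k) = 0 := by
    rw [hMeval]
    exact Finset.prod_eq_zero (mem_univ k) (by simp)
  rw [hD] at hev
  simp only [eval_add, eval_mul, eval_C, eval_sub, eval_zero, e3,
    eval_Pnu_gamma γ hγ ν k, hM'eval] at hev
  have hd : (∏ l ∈ Finset.univ.erase k, (γ k - γ l)) ≠ 0 :=
    Finset.prod_ne_zero_iff.mpr fun l hl =>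
      sub_ne_zero.mpr fun he => (Finset.mem_erase.mp hl).1 (hγ he).symm
  rw [eq_div_iff hd]
  linarith [hev]

lemma assemble (hN : 1 ≤ N) (γ χ : Fin N → ℝ) (hγ : Function.Injective γ)
    (hχ : Function.Injective χ) (hne : ∀ k j, γ k ≠ χ j) (C : ℝ)
    (hpos : ∀ k, 0 < C * (∏ j, (γ k - χ j)) / ∏ l ∈ Finset.univ.erase k, (γ k - γ l)) :
    ∃! ν : Fin N → ℝ, (∀ k, 0 < ν k) ∧ ∀ j, ∑ k, ν k / (γ k - χ j) = C := by
  obtain ⟨ν, hsum, hform⟩ := exists_formula hN γ χ hγ hχ hne C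
  refine ⟨ν, ⟨fun k => by rw [hform k]; exact hpos k, hsum⟩, ?_⟩
  rintro ν' ⟨_, hsum'⟩
  exact uniq hN γ χ hγ hχ hne ν' ν fun j => (hsum' j).trans (hsum j).symm

lemma ratio_rw (γ χ : Fin N → ℝ) (C : ℝ) (k : Fin N) :
    C * (∏ j, (γ k - χ j)) / ∏ l ∈ Finset.univ.erase k, (γ k - γ l)
      = C * (γ k - χ k) * ∏ l ∈ Finset.univ.erase k, ((γ k - χ l) / (γ k - γ l)) := by
  rw [← Finset.mul_prod_erase Finset.univ _ (mem_univ k), Finset.prod_div_distrib]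
  ring

end Stmt3Aux

open Stmt3Aux Finset in
/-- Converse for finite Jacobi ellipsoidal coordinates: given interlacing data
(`χ` below the poles for `C > 0`, above for `C < 0`) there is a unique vector of
positive weights `ν` with `∑ ν_k/(γ_k - χ_j) = C` for all `j`. -/
theorem stmt_3 (N : ℕ) (hN : 1 ≤ N) (γ : Fin N → ℝ) (hγ : StrictMono γ) :
    (∀ C : ℝ, 0 < C → ∀ χ : Fin N → ℝ, StrictMono χ →
      (∀ k, χ k < γ k) → (∀ i j : Fin N, (i : ℕ) + 1 = (j : ℕ) → γ i < χ j) →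
      ∃! ν : Fin N → ℝ, (∀ k, 0 < ν k) ∧ ∀ j, ∑ k, ν k / (γ k - χ j) = C) ∧
    (∀ C : ℝ, C < 0 → ∀ χ : Fin N → ℝ, StrictMono χ →
      (∀ k, γ k < χ k) → (∀ i j : Fin N, (i : ℕ) + 1 = (j : ℕ) → χ i < γ j) →
      ∃! ν : Fin N → ℝ, (∀ k, 0 < ν k) ∧ ∀ j, ∑ k, ν k / (γ k - χ j) = C) := by
  constructor
  · intro C hC χ hχ hlt hgt
    have hA : ∀ j k : Fin N, j ≤ k → χ j < γ k :=
      fun j k h => lt_of_le_of_lt (hχ.monotone h) (hlt k)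
    have hB : ∀ j k : Fin N, k < j → γ k < χ j := by
      intro j k h
      have h1 : 1 ≤ (j : ℕ) := by
        have := Fin.lt_iff_val_lt_val.mp h; omega
      set i : Fin N := ⟨(j : ℕ) - 1, by have := j.isLt; omega⟩ with hi
      have h2 : γ i < χ j := hgt i j (by simp [hi]; omega)
      have h3 : γ k ≤ γ i := by
        refine hγ.monotone ?_
        rw [Fin.le_def]
        have := Fin.lt_iff_val_lt_val.mp h
        simp [hi]; omega
      linarith
    have hne : ∀ k j : Fin N, γ k ≠ χ j := by
      intro k j
      rcases le_or_gt j k with h | h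
      · exact (hA j k h).ne'
      · exact (hB j k h).ne
    refine assemble hN γ χ hγ.injective hχ.injective hne C fun k => ?_
    rw [ratio_rw]
    refine mul_pos (mul_pos hC (sub_pos.mpr (hlt k))) (Finset.prod_pos fun l hl => ?_)
    have hlk : l ≠ k := (Finset.mem_erase.mp hl).1
    rcases lt_or_gt_of_ne hlk with h | h
    · exact div_pos (sub_pos.mpr (hA l k h.le)) (sub_pos.mpr (hγ h))
    · exact div_pos_iff.mpr (Or.inr ⟨sub_neg.mpr (hB l k h), sub_neg.mpr (hγ h)⟩)
  · intro C hC χ hχ hlt hgt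
    have hA : ∀ j k : Fin N, k ≤ j → γ k < χ j :=
      fun j k h => lt_of_le_of_lt (hγ.monotone h) (hlt j)
    have hB : ∀ j k : Fin N, j < k → χ j < γ k := by
      intro j k h
      have hjk := Fin.lt_iff_val_lt_val.mp h
      set i : Fin N := ⟨(j : ℕ) + 1, by have := k.isLt; omega⟩ with hi
      have h2 : χ j < γ i := hgt j i (by simp [hi])
      have h3 : γ i ≤ γ k := by
        refine hγ.monotone ?_
        rw [Fin.le_def]
        simp [hi]; omega
      linarith
    have hne : ∀ k j : Fin N, γ k ≠ χ j := by
      intro k j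
      rcases le_or_gt k j with h | h
      · exact (hA j k h).ne
      · exact (hB j k h).ne'
    refine assemble hN γ χ hγ.injective hχ.injective hne C fun k => ?_
    rw [ratio_rw]
    refine mul_pos (mul_pos_of_neg_of_neg hC (sub_neg.mpr (hlt k)))
      (Finset.prod_pos fun l hl => ?_)
    have hlk : l ≠ k := (Finset.mem_erase.mp hl).1
    rcases lt_or_gt_of_ne hlk with h | h
    · exact div_pos (sub_pos.mpr (hB l k h)) (sub_pos.mpr (hγ h))
    · exact div_pos_iff.mpr (Or.inr ⟨sub_neg.mpr (hA l k h.le), sub_neg.mpr (hγ h)⟩)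
end

section
/- (Multiplicative Boole-type formula) Let N ≥ 1, let 0 < γ₁ < ⋯ < γ_N, let ν₁,…,ν_N > 0, set Υ(λ) = Σ_{k=1}^{N} ν_k/(γ_k − λ), and let s₋₁ = Υ(0) = Σ_{k=1}^{N} ν_k/γ_k. Suppose C > s₋₁. Then the N real solutions χ₁ < ⋯ < χ_N of Υ(λ) = C are all positive, satisfy χ_k < γ_k for each k, and ∏_{k=1}^{N} (γ_k/χ_k) = C/(C − s₋₁). -/
open Polynomial Finset


/-- Multiplicative Boole-type formula: for positive poles `γ` and `C > s₋₁ = ∑ ν_k/γ_k`,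
the `N` real solutions `χ₁ < ⋯ < χ_N` of `∑ ν_k/(γ_k - λ) = C` are positive,
satisfy `χ_k < γ_k`, and `∏ (γ_k/χ_k) = C/(C - s₋₁)`. -/
theorem stmt_4 (N : ℕ) (hN : 1 ≤ N) (γ ν : Fin N → ℝ)
    (hγ : StrictMono γ) (hγpos : ∀ k, 0 < γ k) (hν : ∀ k, 0 < ν k)
    (C : ℝ) (hC : (∑ k, ν k / γ k) < C)
    (χ : Fin N → ℝ) (hχ : StrictMono χ) (hne : ∀ j k, χ j ≠ γ k)
    (hroot : ∀ j, ∑ k, ν k / (γ k - χ j) = C) :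
    (∀ k, 0 < χ k) ∧ (∀ k, χ k < γ k) ∧
    (∏ k, γ k / χ k) = C / (C - ∑ k, ν k / γ k) := by
  classical
  have hNe : Nonempty (Fin N) := ⟨⟨0, hN⟩⟩
  have hdne : ∀ j k, γ k - χ j ≠ 0 := fun j k => sub_ne_zero.mpr (hne j k).symm
  have hs : 0 < ∑ k, ν k / γ k :=
    Finset.sum_pos (fun k _ => div_pos (hν k) (hγpos k)) Finset.univ_nonempty
  have hCpos : 0 < C := hs.trans hC
  -- strict monotonicity of Υ on pole-free segments
  have hmono : ∀ a b : ℝ, a < b → (∀ k, γ k < a ∨ b < γ k) →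
      (∑ k, ν k / (γ k - a)) < ∑ k, ν k / (γ k - b) := by
    intro a b hab hout
    apply Finset.sum_lt_sum_of_nonempty Finset.univ_nonempty
    intro k _
    have hda : γ k - a ≠ 0 := by rcases hout k with h | h <;> intro he <;> nlinarith
    have hdb : γ k - b ≠ 0 := by rcases hout k with h | h <;> intro he <;> nlinarith
    have hprod : 0 < (γ k - a) * (γ k - b) := by
      rcases hout k with h | h <;> nlinarith
    have heq : ν k / (γ k - a) - ν k / (γ k - b)
        = (ν k * (a - b)) / ((γ k - a) * (γ k - b)) := by
      field_simp; ring
    have : ν k / (γ k - a) - ν k / (γ k - b) < 0 := by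
      rw [heq]
      apply div_neg_of_neg_of_pos _ hprod
      nlinarith [hν k]
    linarith
  -- between two roots there is a pole
  have hpole : ∀ i j : Fin N, i < j → ∃ k, χ i < γ k ∧ γ k < χ j := by
    intro i j hij
    by_contra hcon
    push_neg at hcon
    have hout : ∀ k, γ k < χ i ∨ χ j < γ k := by
      intro k
      rcases lt_or_ge (γ k) (χ i) with h | h
      · exact Or.inl h
      · right
        have h1 : χ i < γ k := lt_of_le_of_ne h (hne i k)
        have h2 : χ j ≤ γ k := hcon k h1
        exact lt_of_le_of_ne h2 (hne j k)
    have := hmono (χ i) (χ j) (hχ hij) hout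
    rw [hroot i, hroot j] at this
    exact lt_irrefl _ this
  -- χ k < γ k
  have hlt : ∀ k, χ k < γ k := by
    have key : ∀ m : ℕ, ∀ k : Fin N, N - 1 - (k : ℕ) ≤ m → χ k < γ k := by
      intro m
      induction m with
      | zero =>
        intro k hk
        -- k is the top index
        have hktop : ∀ i : Fin N, γ i ≤ γ k := by
          intro i
          apply hγ.monotone
          have : (i : ℕ) ≤ k := by omega
          exact this
        rcases lt_or_ge (χ k) (γ k) with h | h
        · exact h
        have hgt : γ k < χ k := lt_of_le_of_ne h (hne k k).symm
        have hneg : (∑ i, ν i / (γ i - χ k)) < 0 := by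
          apply Finset.sum_neg (fun i _ => ?_) Finset.univ_nonempty
          apply div_neg_of_pos_of_neg (hν i)
          have := hktop i
          linarith
        rw [hroot k] at hneg
        linarith
      | succ m ih =>
        intro k hk
        rcases le_or_gt (N - 1 - (k : ℕ)) m with h | h
        · exact ih k h
        have hklt : (k : ℕ) + 1 < N := by omega
        set k' : Fin N := ⟨(k : ℕ) + 1, hklt⟩ with hk'
        have hkk' : k < k' := by simp [hk', Fin.lt_def]
        have hk'lt : χ k' < γ k' := ih k' (by simp [hk']; omega)
        obtain ⟨t, ht1, ht2⟩ := hpole k k' hkk'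
        have htk' : γ t < γ k' := ht2.trans hk'lt
        have htle : t ≤ k := by
          have := (hγ.lt_iff_lt).mp htk'
          rw [Fin.lt_def] at this
          simp only [hk'] at this
          exact Fin.le_def.mpr (by omega)
        have : γ t ≤ γ k := hγ.monotone htle
        linarith
    intro k
    exact key (N - 1 - (k : ℕ)) k le_rfl
  -- positivity
  have hpos : ∀ k, 0 < χ k := by
    have h0 : 0 < χ ⟨0, hN⟩ := by
      rcases lt_trichotomy (χ ⟨0, hN⟩) 0 with h | h | h
      · have hout : ∀ k, γ k < χ ⟨0, hN⟩ ∨ (0 : ℝ) < γ k := fun k => Or.inr (hγpos k)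
        have := hmono (χ ⟨0, hN⟩) 0 h hout
        rw [hroot ⟨0, hN⟩] at this
        simp only [sub_zero] at this
        linarith
      · have := hroot ⟨0, hN⟩
        rw [h] at this
        simp only [sub_zero] at this
        linarith
      · exact h
    intro k
    have : χ ⟨0, hN⟩ ≤ χ k := hχ.monotone (Fin.mk_le_of_le_val (Nat.zero_le _))
    linarith
  refine ⟨hpos, hlt, ?_⟩
  -- the polynomial identity
  set A : ℝ[X] := ∏ k, (X - Polynomial.C (γ k)) with hA
  set A' : ℝ[X] := ∏ k, (X - Polynomial.C (χ k)) with hA'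
  set B : ℝ[X] := ∑ k, Polynomial.C (ν k) * ∏ m ∈ Finset.univ.erase k, (X - Polynomial.C (γ m)) with hB
  set P : ℝ[X] := Polynomial.C C * (A - A') + B with hP
  have hAm : A.Monic := monic_prod_of_monic _ _ fun k _ => monic_X_sub_C _
  have hA'm : A'.Monic := monic_prod_of_monic _ _ fun k _ => monic_X_sub_C _
  have hAdeg : A.natDegree = N := by
    rw [hA, natDegree_prod_of_monic _ _ fun k _ => monic_X_sub_C _]
    simp [natDegree_X_sub_C]
  have hA'deg : A'.natDegree = N := by
    rw [hA', natDegree_prod_of_monic _ _ fun k _ => monic_X_sub_C _]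
    simp [natDegree_X_sub_C]
  have hPdeg : P.degree < (N : ℕ) := by
    rw [hP]
    apply lt_of_le_of_lt (degree_add_le _ _)
    rw [sup_lt_iff]
    constructor
    · apply lt_of_le_of_lt (degree_mul_le _ _)
      have h1 : (A - A').degree < (N : ℕ) := by
        have hd : A.degree = A'.degree := by
          rw [degree_eq_natDegree hAm.ne_zero, degree_eq_natDegree hA'm.ne_zero, hAdeg, hA'deg]
        have hl : A.leadingCoeff = A'.leadingCoeff := by
          rw [hAm.leadingCoeff, hA'm.leadingCoeff]
        have := degree_sub_lt hd hAm.ne_zero hl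
        rwa [degree_eq_natDegree hAm.ne_zero, hAdeg] at this
      calc (Polynomial.C C).degree + (A - A').degree ≤ 0 + (A - A').degree := by
            gcongr; exact degree_C_le
        _ = (A - A').degree := by rw [zero_add]
        _ < (N : ℕ) := h1
    · rw [hB]
      apply lt_of_le_of_lt (degree_sum_le _ _)
      rw [Finset.sup_lt_iff (by exact_mod_cast WithBot.bot_lt_coe (N:ℕ))]
      intro k _
      apply lt_of_le_of_lt (degree_mul_le _ _)
      have hq : (∏ m ∈ Finset.univ.erase k, (X - Polynomial.C (γ m))).degree = ((N - 1 : ℕ) : WithBot ℕ) := by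
        have hm : (∏ m ∈ Finset.univ.erase k, (X - Polynomial.C (γ m))).Monic :=
          monic_prod_of_monic _ _ fun m _ => monic_X_sub_C _
        rw [degree_eq_natDegree hm.ne_zero, natDegree_prod_of_monic _ _ fun m _ => monic_X_sub_C _]
        simp [natDegree_X_sub_C, Finset.card_erase_of_mem]
      calc (Polynomial.C (ν k)).degree + _ ≤ 0 + ((N - 1 : ℕ) : WithBot ℕ) := by
            rw [hq]; gcongr; exact degree_C_le
        _ = ((N - 1 : ℕ) : WithBot ℕ) := by rw [zero_add]
        _ < (N : ℕ) := by exact_mod_cast Nat.sub_lt (by omega) one_pos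
  -- P vanishes at all χ j
  have heval : ∀ j, P.eval (χ j) = 0 := by
    intro j
    have hA'0 : A'.eval (χ j) = 0 := by
      rw [hA', eval_prod]
      exact Finset.prod_eq_zero (Finset.mem_univ j) (by simp)
    have hBval : B.eval (χ j) = - C * ∏ m, (χ j - γ m) := by
      rw [hB]
      simp only [eval_finset_sum, eval_mul, eval_C, eval_prod, eval_sub, eval_X]
      have : ∀ k ∈ Finset.univ, ν k * ∏ m ∈ Finset.univ.erase k, (χ j - γ m)
          = -(ν k / (γ k - χ j)) * ∏ m, (χ j - γ m) := by
        intro k _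
        rw [← Finset.mul_prod_erase Finset.univ _ (Finset.mem_univ k)]
        field_simp [hdne j k]
        ring
      rw [Finset.sum_congr rfl this, ← Finset.sum_mul, Finset.sum_neg_distrib, hroot j]
    rw [hP]
    simp only [eval_add, eval_mul, eval_C, eval_sub, hA'0, hBval]
    rw [hA, eval_prod]
    simp only [eval_sub, eval_X, eval_C]
    ring
  have hP0 : P = 0 := by
    by_cases h : P = 0
    · exact h
    exact eq_zero_of_natDegree_lt_card_of_eval_eq_zero P hχ.injective heval
      (by rw [Fintype.card_fin]; exact (natDegree_lt_iff_degree_lt h).mpr hPdeg)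
  -- evaluate at 0
  have hkey : C * ∏ k, χ k = (C - ∑ k, ν k / γ k) * ∏ k, γ k := by
    have h0 : P.eval 0 = 0 := by rw [hP0]; simp
    rw [hP] at h0
    simp only [eval_add, eval_mul, eval_C, eval_sub, eval_prod, eval_X, eval_finset_sum] at h0
    have hng : ∀ f : Fin N → ℝ, ∏ k, (0 - f k) = (-1) ^ N * ∏ k, f k := by
      intro f
      calc ∏ k, ((0:ℝ) - f k) = ∏ k, (-1) * f k := by simp
        _ = (∏ _k : Fin N, (-1:ℝ)) * ∏ k, f k := Finset.prod_mul_distrib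
        _ = (-1) ^ N * ∏ k, f k := by
            rw [Finset.prod_const, Finset.card_univ, Fintype.card_fin]
    have hng' : ∀ k : Fin N, ∏ m ∈ Finset.univ.erase k, ((0:ℝ) - γ m)
        = (-1) ^ (N - 1) * ∏ m ∈ Finset.univ.erase k, γ m := by
      intro k
      calc ∏ m ∈ Finset.univ.erase k, ((0:ℝ) - γ m)
          = ∏ m ∈ Finset.univ.erase k, (-1) * γ m := by simp
        _ = (∏ _m ∈ Finset.univ.erase k, (-1:ℝ)) * ∏ m ∈ Finset.univ.erase k, γ m :=
            Finset.prod_mul_distrib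
        _ = (-1) ^ (N - 1) * ∏ m ∈ Finset.univ.erase k, γ m := by
            rw [Finset.prod_const, Finset.card_erase_of_mem (Finset.mem_univ k),
              Finset.card_univ, Fintype.card_fin]
    rw [hA, hA', hB] at h0
    simp only [eval_add, eval_mul, eval_C, eval_sub, eval_prod, eval_X, eval_finset_sum] at h0
    rw [hng γ, hng χ, Finset.sum_congr rfl (fun k _ => by rw [hng' k])] at h0
    have hsum : ∑ k, ν k * ((-1 : ℝ) ^ (N - 1) * ∏ m ∈ Finset.univ.erase k, γ m)
        = (-1 : ℝ) ^ (N - 1) * ((∑ k, ν k / γ k) * ∏ k, γ k) := by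
      rw [Finset.sum_mul, Finset.mul_sum]
      apply Finset.sum_congr rfl
      intro k _
      rw [← Finset.mul_prod_erase Finset.univ γ (Finset.mem_univ k)]
      field_simp [ne_of_gt (hγpos k)]
    rw [hsum] at h0
    have hpow : (-1 : ℝ) ^ N = -(-1 : ℝ) ^ (N - 1) := by
      have : (-1 : ℝ) ^ (N - 1) * (-1) = (-1 : ℝ) ^ N := by
        rw [← pow_succ]; congr 1; omega
      linarith
    have h2 : (-1 : ℝ) ^ (N - 1) * (C * ∏ k, χ k - (C - ∑ k, ν k / γ k) * ∏ k, γ k) = 0 := by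
      linear_combination h0 + C * ((∏ k, χ k) - ∏ k, γ k) * hpow
    have h3 := (mul_eq_zero.mp h2).resolve_left (pow_ne_zero _ (by norm_num))
    linarith
  have hχprod : 0 < ∏ k, χ k := Finset.prod_pos fun k _ => hpos k
  have hγprod : 0 < ∏ k, γ k := Finset.prod_pos fun k _ => hγpos k
  rw [Finset.prod_div_distrib]
  rw [div_eq_div_iff (ne_of_gt hχprod) (by linarith)]
  linarith [hkey]
end

section
/- (Nazarov–Yuditskii, case C < 0) Let (γ_k)_{k≥1} be a strictly increasing sequence of positive real numbers tending to +∞, let C < 0, and let (χ_k)_{k≥1} be a sequence of real numbers with γ_k < χ_k < γ_{k+1} for all k. Then the following are equivalent: (i) there exist positive weights (ν_k)_{k≥1} with Σ_k ν_k/γ_k < ∞ such that Σ_k ν_k/(γ_k − χ_j) = C for every j ≥ 1; (ii) Σ_{k=1}^{∞} (χ_k/γ_k − 1) < ∞. -/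
open Finset

lemma ny_key3 {pa pk l qa : ℝ} (h1 : pa - l ≠ 0) (h2 : pk - l ≠ 0) (h3 : pk - pa ≠ 0) :
    (qa - l)/(pa - l)/(pk - l) = (qa - pa)/(pa - l)/(pk - pa) + (qa - pk)/(pa - pk)/(pk - l) := by
  have h3' : pa - pk ≠ 0 := fun h => h3 (by linarith [sub_eq_zero.1 h])
  field_simp
  ring

lemma ny_PF (p q : ℕ → ℝ) (s : Finset ℕ)
    (hdist : ∀ i ∈ s, ∀ j ∈ s, i ≠ j → p i ≠ p j) :
    ∀ l : ℝ, (∀ k ∈ s, p k - l ≠ 0) →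
    ∏ k ∈ s, (q k - l)/(p k - l)
      = 1 + ∑ k ∈ s, ((q k - p k) * ∏ j ∈ s.erase k, (q j - p k)/(p j - p k)) / (p k - l) := by
  induction s using Finset.induction_on with
  | empty => simp
  | @insert a s ha IH =>
    intro l hl
    have hdists : ∀ i ∈ s, ∀ j ∈ s, i ≠ j → p i ≠ p j := fun i hi j hj hij =>
      hdist i (mem_insert_of_mem hi) j (mem_insert_of_mem hj) hij
    have hpal : p a - l ≠ 0 := hl a (mem_insert_self a s)
    have hpkl : ∀ k ∈ s, p k - l ≠ 0 := fun k hk => hl k (mem_insert_of_mem hk)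
    have hpka : ∀ k ∈ s, p k - p a ≠ 0 := by
      intro k hk
      refine sub_ne_zero.2 (hdist k (mem_insert_of_mem hk) a (mem_insert_self a s) ?_)
      rintro rfl; exact ha hk
    have IH1 := IH hdists l hpkl
    have IH2 := IH hdists (p a) hpka
    set W : ℕ → ℝ := fun k => (q k - p k) * ∏ j ∈ s.erase k, (q j - p k)/(p j - p k) with hW
    have e1 : ∑ k ∈ s, ((q k - p k) * ∏ j ∈ (insert a s).erase k, (q j - p k)/(p j - p k)) / (p k - l)
        = ∑ k ∈ s, W k * ((q a - p k)/(p a - p k))/(p k - l) := by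
      refine Finset.sum_congr rfl (fun k hk => ?_)
      have hne : a ∉ s.erase k := fun h => ha (mem_of_mem_erase h)
      rw [Finset.erase_insert_of_ne (by rintro rfl; exact ha hk), prod_insert hne]
      simp only [hW]
      generalize (∏ j ∈ s.erase k, (q j - p k)/(p j - p k)) = P
      ring
    have e2 : (q a - l)/(p a - l) * (1 + ∑ k ∈ s, W k / (p k - l))
        = (q a - l)/(p a - l) + ∑ k ∈ s, W k * ((q a - l)/(p a - l)/(p k - l)) := by
      rw [mul_add, mul_one, Finset.mul_sum]
      congr 1
      refine Finset.sum_congr rfl (fun k hk => ?_)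
      ring
    have e3 : ∑ k ∈ s, W k * ((q a - l)/(p a - l)/(p k - l))
        = ∑ k ∈ s, W k * ((q a - p a)/(p a - l)/(p k - p a))
          + ∑ k ∈ s, W k * ((q a - p k)/(p a - p k)/(p k - l)) := by
      rw [← Finset.sum_add_distrib]
      refine Finset.sum_congr rfl (fun k hk => ?_)
      rw [← mul_add, ny_key3 hpal (hpkl k hk) (hpka k hk)]
    have e4 : ∑ k ∈ s, W k * ((q a - p a)/(p a - l)/(p k - p a))
        = (q a - p a)/(p a - l) * ∑ k ∈ s, W k / (p k - p a) := by
      rw [Finset.mul_sum]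
      refine Finset.sum_congr rfl (fun k hk => ?_)
      ring
    have e2' : ∑ k ∈ s, W k * ((q a - p k)/(p a - p k))/(p k - l)
        = ∑ k ∈ s, W k * ((q a - p k)/(p a - p k)/(p k - l)) := by
      refine Finset.sum_congr rfl (fun k hk => ?_)
      ring
    have e5 : (q a - l)/(p a - l) = 1 + (q a - p a)/(p a - l) := by
      field_simp
      ring
    rw [prod_insert ha, sum_insert ha, IH1, erase_insert ha, e1, e2', e2, e3, e4, e5, IH2]
    generalize (∑ k ∈ s, W k / (p k - p a)) = B
    generalize (∑ k ∈ s, W k * ((q a - p k)/(p a - p k)/(p k - l))) = S2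
    ring

open Finset

noncomputable def nyW (γ χ : ℕ → ℝ) (n k : ℕ) : ℝ :=
  (χ k - γ k) * ∏ j ∈ (Finset.range n).erase k, (χ j - γ k) / (γ j - γ k)

section ctx

variable {γ χ : ℕ → ℝ}

lemma ny_glt (hγ : StrictMono γ) (hint : ∀ k, γ k < χ k ∧ χ k < γ (k + 1))
    {k j : ℕ} (h : k ≤ j) : γ k < χ j :=
  lt_of_le_of_lt (hγ.monotone h) (hint j).1

lemma ny_clt (hγ : StrictMono γ) (hint : ∀ k, γ k < χ k ∧ χ k < γ (k + 1))
    {i m : ℕ} (h : i < m) : χ i < γ m :=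
  lt_of_lt_of_le (hint i).2 (hγ.monotone h)

lemma ny_chi_mono (hγ : StrictMono γ) (hint : ∀ k, γ k < χ k ∧ χ k < γ (k + 1)) :
    StrictMono χ := fun i j h =>
  lt_trans (ny_clt hγ hint h) (hint j).1

lemma ny_chi_ne_gamma (hγ : StrictMono γ) (hint : ∀ k, γ k < χ k ∧ χ k < γ (k + 1))
    (i j : ℕ) : γ j - χ i ≠ 0 := by
  rcases le_or_gt j i with h | h
  · exact sub_ne_zero.2 (ne_of_lt (ny_glt hγ hint h))
  · exact sub_ne_zero.2 (ne_of_gt (ny_clt hγ hint h))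

lemma ny_F1 (hγ : StrictMono γ) (n : ℕ) (l : ℝ) (hl : ∀ j ∈ Finset.range n, γ j - l ≠ 0) :
    ∏ k ∈ Finset.range n, (χ k - l) / (γ k - l)
      = 1 + ∑ k ∈ Finset.range n, nyW γ χ n k / (γ k - l) := by
  exact ny_PF γ χ (Finset.range n)
    (fun i _ j _ hij => fun h => hij (hγ.injective h)) l hl

lemma ny_F2 (hγ : StrictMono γ) (hint : ∀ k, γ k < χ k ∧ χ k < γ (k + 1))
    {n i : ℕ} (hi : i < n) :
    ∑ k ∈ Finset.range n, nyW γ χ n k / (γ k - χ i) = -1 := by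
  have h := ny_F1 (χ := χ) hγ n (χ i) (fun j _ => ny_chi_ne_gamma hγ hint i j)
  have h0 : ∏ k ∈ Finset.range n, (χ k - χ i) / (γ k - χ i) = 0 :=
    Finset.prod_eq_zero (Finset.mem_range.2 hi) (by simp)
  rw [h0] at h
  linarith

lemma ny_F3 (hγ : StrictMono γ) (hγpos : ∀ k, 0 < γ k) (n : ℕ) :
    ∑ k ∈ Finset.range n, nyW γ χ n k / γ k
      = ∏ k ∈ Finset.range n, χ k / γ k - 1 := by
  have h := ny_F1 (χ := χ) hγ n 0 (fun j _ => by simpa using (hγpos j).ne')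
  simp only [sub_zero] at h
  linarith

lemma ny_ratio_pos (hγ : StrictMono γ) (hint : ∀ k, γ k < χ k ∧ χ k < γ (k + 1))
    {j k : ℕ} (h : j ≠ k) : 0 < (χ j - γ k) / (γ j - γ k) := by
  rcases lt_or_gt_of_ne h with hlt | hgt
  · apply div_pos_of_neg_of_neg <;> simp only [sub_neg]
    · exact ny_clt hγ hint hlt
    · exact hγ hlt
  · apply div_pos <;> simp only [sub_pos]
    · exact ny_glt hγ hint (le_of_lt hgt)
    · exact hγ hgt

lemma ny_W_pos (hγ : StrictMono γ) (hint : ∀ k, γ k < χ k ∧ χ k < γ (k + 1))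
    (n k : ℕ) : 0 < nyW γ χ n k := by
  apply mul_pos (by linarith [(hint k).1])
  exact Finset.prod_pos (fun j hj => ny_ratio_pos hγ hint (Finset.ne_of_mem_erase hj))

lemma ny_W_succ {n k : ℕ} (hk : k < n) :
    nyW γ χ (n + 1) k = nyW γ χ n k * ((χ n - γ k) / (γ n - γ k)) := by
  have h1 : (Finset.range (n+1)).erase k = insert n ((Finset.range n).erase k) := by
    rw [Finset.range_add_one, Finset.erase_insert_of_ne (by omega)]
  have h2 : n ∉ (Finset.range n).erase k := by simp
  rw [nyW, h1, Finset.prod_insert h2, nyW]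
  ring

lemma ny_W_mono (hγ : StrictMono γ) (hint : ∀ k, γ k < χ k ∧ χ k < γ (k + 1))
    {k m n : ℕ} (hk : k < m) (hmn : m ≤ n) : nyW γ χ m k ≤ nyW γ χ n k := by
  induction n, hmn using Nat.le_induction with
  | base => exact le_refl _
  | succ n hn IH =>
    refine le_trans IH ?_
    rw [ny_W_succ (lt_of_lt_of_le hk hn)]
    have h1 : (1:ℝ) ≤ (χ n - γ k) / (γ n - γ k) := by
      rw [le_div_iff₀ (by simp only [sub_pos]; exact hγ (lt_of_lt_of_le hk hn))]
      have := (hint n).1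
      linarith
    nlinarith [ny_W_pos (χ := χ) hγ hint n k]

lemma ny_uniq (hγ : StrictMono γ) (hint : ∀ k, γ k < χ k ∧ χ k < γ (k + 1))
    (n : ℕ) (e : ℕ → ℝ) (h : ∀ i < n, ∑ k ∈ Finset.range n, e k / (γ k - χ i) = 0) :
    ∀ k < n, e k = 0 := by
  classical
  rcases Nat.eq_zero_or_pos n with rfl | hn
  · intro k hk; omega
  set P : Polynomial ℝ :=
    ∑ k ∈ Finset.range n, Polynomial.C (e k) *
      ∏ j ∈ (Finset.range n).erase k, (Polynomial.C (γ j) - Polynomial.X) with hP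
  have hdeg1 : ∀ k ∈ Finset.range n,
      (Polynomial.C (e k) * ∏ j ∈ (Finset.range n).erase k,
        (Polynomial.C (γ j) - Polynomial.X)).degree < (n : ℕ) := by
    intro k hk
    refine lt_of_le_of_lt (Polynomial.degree_mul_le _ _) ?_
    have hd : ∀ j : ℕ, (Polynomial.C (γ j) - Polynomial.X).degree = 1 := by
      intro j
      have : Polynomial.C (γ j) - Polynomial.X = -(Polynomial.X - Polynomial.C (γ j)) := by ring
      rw [this, Polynomial.degree_neg, Polynomial.degree_X_sub_C]
    have hprod : (∏ j ∈ (Finset.range n).erase k,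
        (Polynomial.C (γ j) - Polynomial.X)).degree = ((n - 1 : ℕ) : WithBot ℕ) := by
      rw [Polynomial.degree_prod]
      rw [Finset.sum_congr rfl (fun j _ => hd j)]
      rw [Finset.sum_const, Finset.card_erase_of_mem hk, Finset.card_range]
      simp [nsmul_eq_mul]
    rw [hprod]
    have hC : (Polynomial.C (e k)).degree ≤ 0 := Polynomial.degree_C_le
    have hkn : k < n := Finset.mem_range.1 hk
    calc (Polynomial.C (e k)).degree + ((n-1:ℕ) : WithBot ℕ)
        ≤ 0 + ((n-1:ℕ) : WithBot ℕ) := by gcongr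
      _ = ((n-1:ℕ) : WithBot ℕ) := by rw [zero_add]
      _ < (n : ℕ) := by exact_mod_cast Nat.sub_lt (by omega) one_pos
  have hdeg : P.degree < (n : ℕ) :=
    lt_of_le_of_lt (Polynomial.degree_sum_le _ _) (by
      rw [Finset.sup_lt_iff (by exact_mod_cast WithBot.bot_lt_coe n)]
      exact hdeg1)
  have heval : ∀ i < n, P.eval (χ i) = 0 := by
    intro i hi
    have hexp : P.eval (χ i) = ∑ k ∈ Finset.range n,
        e k * ∏ j ∈ (Finset.range n).erase k, (γ j - χ i) := by
      rw [hP, Polynomial.eval_finset_sum]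
      refine Finset.sum_congr rfl (fun k hk => ?_)
      rw [Polynomial.eval_mul, Polynomial.eval_C, Polynomial.eval_prod]
      congr 1
      exact Finset.prod_congr rfl (fun j _ => by
        rw [Polynomial.eval_sub, Polynomial.eval_C, Polynomial.eval_X])
    rw [hexp]
    have hterm : ∀ k ∈ Finset.range n,
        e k * ∏ j ∈ (Finset.range n).erase k, (γ j - χ i)
          = (e k / (γ k - χ i)) * ∏ j ∈ Finset.range n, (γ j - χ i) := by
      intro k hk
      rw [← Finset.mul_prod_erase _ (fun j => γ j - χ i) hk]
      have hne := ny_chi_ne_gamma hγ hint i k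
      field_simp
    rw [Finset.sum_congr rfl hterm, ← Finset.sum_mul, h i hi, zero_mul]
  have hP0 : P = 0 := by
    apply Polynomial.eq_zero_of_natDegree_lt_card_of_eval_eq_zero' P
      ((Finset.range n).image χ)
    · intro x hx
      obtain ⟨i, hi, rfl⟩ := Finset.mem_image.1 hx
      exact heval i (Finset.mem_range.1 hi)
    · rw [Finset.card_image_of_injective _ (ny_chi_mono hγ hint).injective,
        Finset.card_range]
      by_cases hPz : P = 0
      · rw [hPz]; simpa using hn
      · exact Polynomial.natDegree_lt_iff_degree_lt hPz |>.2 hdeg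
  intro k hk
  have hev : P.eval (γ k) = 0 := by rw [hP0]; simp
  have hexp : P.eval (γ k) = e k * ∏ j ∈ (Finset.range n).erase k, (γ j - γ k) := by
    rw [hP, Polynomial.eval_finset_sum]
    rw [Finset.sum_eq_single k]
    · rw [Polynomial.eval_mul, Polynomial.eval_C, Polynomial.eval_prod]
      congr 1
      exact Finset.prod_congr rfl (fun j _ => by
        rw [Polynomial.eval_sub, Polynomial.eval_C, Polynomial.eval_X])
    · intro b hb hbk
      rw [Polynomial.eval_mul, Polynomial.eval_prod]
      have : k ∈ (Finset.range n).erase b := Finset.mem_erase.2 ⟨fun h => hbk h.symm, Finset.mem_range.2 hk⟩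
      rw [Finset.prod_eq_zero this (by simp), mul_zero]
    · intro hknot
      exact absurd (Finset.mem_range.2 hk) hknot
  rw [hexp] at hev
  have hne : ∏ j ∈ (Finset.range n).erase k, (γ j - γ k) ≠ 0 := by
    apply Finset.prod_ne_zero_iff.2
    intro j hj
    exact sub_ne_zero.2 (fun h => (Finset.ne_of_mem_erase hj) (hγ.injective h))
  exact (mul_eq_zero.1 hev).resolve_right hne

end ctx
open Finset in
lemma ny_key4 {r M g x W : ℝ} (hr : r ≠ 0) (h1 : M - g ≠ 0) (h2 : g - x ≠ 0) (h3 : M - x ≠ 0) :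
    (W / (r * (M - g))) / (g - x) = (1/r) * ((W/(g - x) - W/(g - M))/(M - x)) := by
  have h1' : g - M ≠ 0 := fun h => h1 (by linarith [sub_eq_zero.1 h])
  field_simp
  ring

open Finset in
lemma ny_prod_lb (f : ℕ → ℝ) (hf : ∀ k, 0 ≤ f k) (n : ℕ) :
    1 + ∑ k ∈ Finset.range n, f k ≤ ∏ k ∈ Finset.range n, (1 + f k) := by
  induction n with
  | zero => simp
  | succ n IH =>
    rw [Finset.sum_range_succ, Finset.prod_range_succ]
    have h1 : (1:ℝ) ≤ ∏ k ∈ Finset.range n, (1 + f k) :=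
      le_trans (by linarith [Finset.sum_nonneg (fun k (_ : k ∈ Finset.range n) => hf k)]) IH
    nlinarith [hf n, Finset.sum_nonneg (fun k (_ : k ∈ Finset.range n) => hf k)]

open Finset in
lemma ny_forward (γ χ : ℕ → ℝ) (hγ : StrictMono γ) (hγpos : ∀ k, 0 < γ k)
    (C : ℝ) (hC : C < 0) (hint : ∀ k, γ k < χ k ∧ χ k < γ (k + 1))
    (ν : ℕ → ℝ) (hν : ∀ k, 0 < ν k) (hsum : Summable (fun k => ν k / γ k))
    (heq : ∀ j, (∑' k, ν k / (γ k - χ j)) = C) :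
    Summable (fun k => χ k / γ k - 1) := by
  have hsummable : ∀ j, Summable (fun k => ν k / (γ k - χ j)) := by
    intro j
    by_contra hns
    have := heq j
    rw [tsum_eq_zero_of_not_summable hns] at this
    exact absurd this.symm (ne_of_lt hC)
  -- Key inequality: ν k ≥ (-C) * nyW γ χ n k for k < n
  have key : ∀ n, ∀ k, k < n → (-C) * nyW γ χ n k ≤ ν k := by
    intro n
    set ρ : ℕ → ℝ := fun m => ∏ k ∈ Finset.range n, (γ m - χ k)/(γ m - γ k) with hρ
    have hfacpos : ∀ m, n ≤ m → ∀ k, k < n → 0 < (γ m - χ k) ∧ 0 < (γ m - γ k) := by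
      intro m hm k hk
      constructor
      · have : χ k < γ m := ny_clt hγ hint (lt_of_lt_of_le hk hm)
        linarith
      · have : γ k < γ m := hγ (lt_of_lt_of_le hk hm)
        linarith
    have hρpos : ∀ m, n ≤ m → 0 < ρ m := by
      intro m hm
      exact Finset.prod_pos (fun k hk => div_pos
        ((hfacpos m hm k (Finset.mem_range.1 hk)).1) ((hfacpos m hm k (Finset.mem_range.1 hk)).2))
    have hρstar : ∀ m, n ≤ m → ρ n ≤ ρ m := by
      intro m hm
      refine Finset.prod_le_prod (fun k hk => le_of_lt (div_pos
        ((hfacpos n le_rfl k (Finset.mem_range.1 hk)).1)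
        ((hfacpos n le_rfl k (Finset.mem_range.1 hk)).2))) ?_
      intro k hk
      have hk' := Finset.mem_range.1 hk
      have h1 := hfacpos n le_rfl k hk'
      have h2 := hfacpos m hm k hk'
      have h3 : γ n ≤ γ m := hγ.monotone hm
      have h4 := (hint k).1
      rw [div_le_div_iff₀ h1.2 h2.2]
      nlinarith
    -- the ∑ W/(γ k - γ m) identity
    have hGm : ∀ m, n ≤ m → ∑ k ∈ Finset.range n, nyW γ χ n k / (γ k - γ m) = ρ m - 1 := by
      intro m hm
      have hl : ∀ j ∈ Finset.range n, γ j - γ m ≠ 0 := by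
        intro j hj
        exact sub_ne_zero.2 (ne_of_lt (hγ (lt_of_lt_of_le (Finset.mem_range.1 hj) hm)))
      have h := ny_F1 (χ := χ) hγ n (γ m) hl
      have hprod : ∏ k ∈ Finset.range n, (χ k - γ m) / (γ k - γ m) = ρ m := by
        refine Finset.prod_congr rfl (fun k hk => ?_)
        rw [← neg_div_neg_eq]
        congr 1 <;> ring
      rw [hprod] at h
      linarith
    -- F6
    have F6 : ∀ m, n ≤ m → ∀ i, i < n →
        ∑ k ∈ Finset.range n, (nyW γ χ n k / (ρ m * (γ m - γ k))) / (γ k - χ i)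
          = -(1/(γ m - χ i)) := by
      intro m hm i hi
      have hMx : γ m - χ i ≠ 0 := by
        have : χ i < γ m := ny_clt hγ hint (lt_of_lt_of_le hi hm)
        intro h; rw [sub_eq_zero] at h; linarith
      have hstep : ∀ k ∈ Finset.range n,
          (nyW γ χ n k / (ρ m * (γ m - γ k))) / (γ k - χ i)
            = (1/ρ m) * ((nyW γ χ n k/(γ k - χ i) - nyW γ χ n k/(γ k - γ m))/(γ m - χ i)) := by
        intro k hk
        have hk' := Finset.mem_range.1 hk
        refine ny_key4 (ne_of_gt (hρpos m hm)) ?_ (ny_chi_ne_gamma hγ hint i k) hMx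
        exact sub_ne_zero.2 (ne_of_gt (hγ (lt_of_lt_of_le hk' hm)))
      rw [Finset.sum_congr rfl hstep, ← Finset.mul_sum, ← Finset.sum_div,
        Finset.sum_sub_distrib, ny_F2 hγ hint hi, hGm m hm]
      have hrw : (-1 - (ρ m - 1) : ℝ) = -(ρ m) := by ring
      rw [hrw]
      have hMxpos : 0 < γ m - χ i := by
        have := ny_clt hγ hint (lt_of_lt_of_le hi hm)
        linarith
      rw [div_mul_div_comm, one_mul, neg_div,
        div_mul_cancel_left₀ (ne_of_gt (hρpos m hm)), one_div]
    -- tails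
    have hsplit : ∀ i, i < n → ∑ k ∈ Finset.range n, ν k/(γ k - χ i)
        + ∑' m, ν (m + n) / (γ (m + n) - χ i) = C := by
      intro i _
      rw [Summable.sum_add_tsum_nat_add n (hsummable i)]
      exact heq i
    set δ : ℕ → ℕ → ℝ := fun m k => nyW γ χ n k / (ρ (m + n) * (γ (m + n) - γ k)) with hδ
    have hδpos : ∀ m, ∀ k, k < n → 0 < δ m k := by
      intro m k hk
      refine div_pos (ny_W_pos hγ hint n k) (mul_pos (hρpos (m+n) (by omega)) ?_)
      exact (hfacpos (m+n) (by omega) k hk).2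
    have hδle : ∀ m, ∀ k, k < n →
        δ m k ≤ (nyW γ χ n k / ρ n) * (1/(γ (m + n) - χ k)) := by
      intro m k hk
      have h1 := hfacpos (m+n) (by omega) k hk
      have h2 := hρpos n le_rfl
      have h3 := hρstar (m+n) (by omega)
      have h4 : 0 < γ (m+n) - χ k := by
        have : χ k < γ (m+n) := ny_clt hγ hint (by omega)
        linarith
      have hrhs : (nyW γ χ n k / ρ n) * (1/(γ (m + n) - χ k))
          = nyW γ χ n k / (ρ n * (γ (m + n) - χ k)) := by
        rw [div_mul_div_comm, mul_one]
      rw [hδ, hrhs]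
      simp only
      refine div_le_div_of_nonneg_left (le_of_lt (ny_W_pos hγ hint n k))
        (mul_pos h2 h4) ?_
      exact mul_le_mul h3 (by linarith [(hint k).1]) (le_of_lt h4)
        (le_of_lt (hρpos (m+n) (by omega)))
    have hδsummable : ∀ k, k < n → Summable (fun m => ν (m + n) * δ m k) := by
      intro k hk
      have hs : Summable (fun m => ν (m + n) / (γ (m + n) - χ k)) :=
        (summable_nat_add_iff n).2 (hsummable k)
      refine Summable.of_nonneg_of_le
        (fun m => le_of_lt (mul_pos (hν _) (hδpos m k hk)))
        (fun m => ?_) (hs.mul_left (nyW γ χ n k / ρ n))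
      have h4 : 0 < γ (m+n) - χ k := by
        have : χ k < γ (m+n) := ny_clt hγ hint (by omega)
        linarith
      calc ν (m + n) * δ m k
          ≤ ν (m + n) * ((nyW γ χ n k / ρ n) * (1/(γ (m + n) - χ k))) :=
            mul_le_mul_of_nonneg_left (hδle m k hk) (le_of_lt (hν _))
        _ = nyW γ χ n k / ρ n * (ν (m + n) / (γ (m + n) - χ k)) := by ring
    set σ : ℕ → ℝ := fun k => ∑' m, ν (m + n) * δ m k with hσdef
    have hσnonneg : ∀ k, k < n → 0 ≤ σ k := by
      intro k hk
      exact tsum_nonneg (fun m => le_of_lt (mul_pos (hν _) (hδpos m k hk)))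
    have hσeq : ∀ i, i < n → ∑ k ∈ Finset.range n, σ k / (γ k - χ i)
        = -(∑' m, ν (m + n) / (γ (m + n) - χ i)) := by
      intro i hi
      have h1 : ∀ k ∈ Finset.range n, σ k / (γ k - χ i)
          = ∑' m, ν (m + n) * δ m k / (γ k - χ i) := by
        intro k _
        rw [hσdef]
        exact tsum_div_const.symm
      rw [Finset.sum_congr rfl h1]
      rw [← Summable.tsum_finsetSum (fun k hk => (hδsummable k (Finset.mem_range.1 hk)).div_const _)]
      rw [← tsum_neg]
      refine tsum_congr (fun m => ?_)
      have h2 : ∀ k ∈ Finset.range n, ν (m + n) * δ m k / (γ k - χ i)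
          = ν (m + n) * (δ m k / (γ k - χ i)) := fun k _ => by ring
      rw [Finset.sum_congr rfl h2, ← Finset.mul_sum, F6 (m + n) (by omega) i hi]
      ring
    -- uniqueness
    have h0 : ∀ i < n, ∑ k ∈ Finset.range n,
        (ν k - (-C) * nyW γ χ n k - σ k) / (γ k - χ i) = 0 := by
      intro i hi
      have hexp : ∀ k ∈ Finset.range n,
          (ν k - (-C) * nyW γ χ n k - σ k) / (γ k - χ i)
            = ν k / (γ k - χ i) - (-C) * (nyW γ χ n k / (γ k - χ i)) - σ k / (γ k - χ i) := by
        intro k _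
        ring
      rw [Finset.sum_congr rfl hexp]
      rw [Finset.sum_sub_distrib, Finset.sum_sub_distrib, ← Finset.mul_sum,
        ny_F2 hγ hint hi, hσeq i hi]
      have := hsplit i hi
      linarith
    have huniq := ny_uniq hγ hint n (fun k => ν k - (-C) * nyW γ χ n k - σ k) h0
    intro k hk
    have h2 := hσnonneg k hk
    have h3 : ν k - (-C) * nyW γ χ n k - σ k = 0 := huniq k hk
    linarith
  -- conclude
  have hx : ∀ k, 0 ≤ χ k / γ k - 1 := by
    intro k
    have h1 := hγpos k
    have h2 := (hint k).1
    have : (1:ℝ) ≤ χ k / γ k := by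
      rw [le_div_iff₀ h1]; linarith
    linarith
  refine summable_of_sum_range_le hx (c := (∑' k, ν k / γ k) / (-C)) ?_
  intro n
  have h1 : 1 + ∑ k ∈ Finset.range n, (χ k / γ k - 1) ≤ ∏ k ∈ Finset.range n, (χ k / γ k) := by
    have := ny_prod_lb (fun k => χ k / γ k - 1) hx n
    calc 1 + ∑ k ∈ Finset.range n, (χ k / γ k - 1)
        ≤ ∏ k ∈ Finset.range n, (1 + (χ k / γ k - 1)) := this
      _ = ∏ k ∈ Finset.range n, (χ k / γ k) := Finset.prod_congr rfl (fun k _ => by ring)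
  have h2 : ∏ k ∈ Finset.range n, (χ k / γ k) - 1 = ∑ k ∈ Finset.range n, nyW γ χ n k / γ k :=
    (ny_F3 hγ hγpos n).symm
  have h3 : ∑ k ∈ Finset.range n, nyW γ χ n k / γ k
      ≤ ∑ k ∈ Finset.range n, ν k / γ k / (-C) := by
    refine Finset.sum_le_sum (fun k hk => ?_)
    have hkn := Finset.mem_range.1 hk
    have := key n k hkn
    have hg := hγpos k
    rw [div_le_div_iff₀ hg (by linarith : (0:ℝ) < -C)]
    calc nyW γ χ n k * -C = (-C) * nyW γ χ n k := by ring
      _ ≤ ν k := this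
      _ = ν k / γ k * γ k := by field_simp
  have h4 : ∑ k ∈ Finset.range n, ν k / γ k / (-C) ≤ (∑' k, ν k / γ k) / (-C) := by
    rw [← Finset.sum_div]
    exact (div_le_div_iff_of_pos_right (by linarith : (0:ℝ) < -C)).2
      (Summable.sum_le_tsum (Finset.range n) (fun k _ => le_of_lt (div_pos (hν k) (hγpos k))) hsum)
  linarith
open Finset Filter Topology in
lemma ny_reverse (γ χ : ℕ → ℝ) (hγ : StrictMono γ) (hγpos : ∀ k, 0 < γ k)
    (C : ℝ) (hC : C < 0) (hint : ∀ k, γ k < χ k ∧ χ k < γ (k + 1))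
    (hs : Summable (fun k => χ k / γ k - 1)) :
    ∃ ν : ℕ → ℝ, (∀ k, 0 < ν k) ∧ Summable (fun k => ν k / γ k) ∧
      ∀ j, (∑' k, ν k / (γ k - χ j)) = C := by
  have hx : ∀ k, 0 ≤ χ k / γ k - 1 := by
    intro k
    have h1 := hγpos k
    have h2 := (hint k).1
    have : (1:ℝ) ≤ χ k / γ k := by rw [le_div_iff₀ h1]; linarith
    linarith
  set S : ℝ := ∑' k, (χ k / γ k - 1) with hS
  have boundF3 : ∀ n, ∑ k ∈ Finset.range n, nyW γ χ n k / γ k ≤ Real.exp S - 1 := by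
    intro n
    rw [ny_F3 hγ hγpos n]
    have h1 : ∏ k ∈ Finset.range n, (χ k / γ k) ≤ Real.exp (∑ k ∈ Finset.range n, (χ k / γ k - 1)) := by
      rw [Real.exp_sum]
      refine Finset.prod_le_prod (fun k _ => le_of_lt (div_pos (by linarith [(hint k).1, hγpos k]) (hγpos k))) ?_
      intro k _
      have := Real.add_one_le_exp (χ k / γ k - 1)
      linarith
    have h2 : ∑ k ∈ Finset.range n, (χ k / γ k - 1) ≤ S :=
      Summable.sum_le_tsum _ (fun k _ => hx k) hs
    have h3 := Real.exp_le_exp.2 h2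
    linarith
  have hWb : ∀ n k, k < n → nyW γ χ n k ≤ (Real.exp S - 1) * γ k := by
    intro n k hk
    have h1 : nyW γ χ n k / γ k ≤ ∑ k' ∈ Finset.range n, nyW γ χ n k' / γ k' :=
      Finset.single_le_sum (fun k' _ => le_of_lt (div_pos (ny_W_pos hγ hint n k') (hγpos k')))
        (Finset.mem_range.2 hk)
    have h2 := le_trans h1 (boundF3 n)
    rw [div_le_iff₀ (hγpos k)] at h2
    exact h2
  have hmono : ∀ k, Monotone (fun i => nyW γ χ (i + (k+1)) k) := by
    intro k i j hij
    exact ny_W_mono hγ hint (by omega) (by omega)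
  have hbdd : ∀ k, BddAbove (Set.range (fun i => nyW γ χ (i + (k+1)) k)) := by
    intro k
    refine ⟨(Real.exp S - 1) * γ k, ?_⟩
    rintro x ⟨i, rfl⟩
    exact hWb (i + (k+1)) k (by omega)
  set L : ℕ → ℝ := fun k => ⨆ i, nyW γ χ (i + (k+1)) k with hL
  have hten : ∀ k, Tendsto (fun n => nyW γ χ n k) atTop (𝓝 (L k)) := by
    intro k
    have h1 := tendsto_atTop_ciSup (hmono k) (hbdd k)
    exact (Filter.tendsto_add_atTop_iff_nat (k+1)).1 h1
  have hWleL : ∀ k n, k < n → nyW γ χ n k ≤ L k := by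
    intro k n hkn
    have h1 : nyW γ χ n k = nyW γ χ ((n - (k+1)) + (k+1)) k := by congr 1; omega
    rw [h1, hL]
    exact le_ciSup (hbdd k) (n - (k+1))
  have hLpos : ∀ k, 0 < L k := by
    intro k
    have h1 : nyW γ χ (0 + (k+1)) k ≤ L k := le_ciSup (hbdd k) 0
    rw [Nat.zero_add] at h1
    exact lt_of_lt_of_le (ny_W_pos hγ hint (k+1) k) h1
  have hCpos : (0:ℝ) < -C := by linarith
  refine ⟨fun k => (-C) * L k, fun k => mul_pos hCpos (hLpos k), ?_, ?_⟩
  · -- summability of ν k / γ k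
    refine summable_of_sum_range_le (c := (-C) * (Real.exp S - 1))
      (fun k => le_of_lt (div_pos (mul_pos hCpos (hLpos k)) (hγpos k))) ?_
    intro K
    have hlim : Tendsto (fun n => ∑ k ∈ Finset.range K, (-C) * nyW γ χ n k / γ k) atTop
        (𝓝 (∑ k ∈ Finset.range K, (-C) * L k / γ k)) := by
      refine tendsto_finset_sum _ (fun k _ => ?_)
      exact (((hten k).const_mul (-C)).div_const (γ k))
    refine le_of_tendsto hlim ?_
    filter_upwards [Filter.eventually_ge_atTop K] with n hn
    have h1 : ∑ k ∈ Finset.range K, (-C) * nyW γ χ n k / γ k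
        ≤ ∑ k ∈ Finset.range n, (-C) * nyW γ χ n k / γ k := by
      refine Finset.sum_le_sum_of_subset_of_nonneg (Finset.range_subset_range.2 hn) ?_
      intro k hk _
      exact le_of_lt (div_pos (mul_pos hCpos (ny_W_pos hγ hint n k)) (hγpos k))
    have h2 : ∑ k ∈ Finset.range n, (-C) * nyW γ χ n k / γ k
        = (-C) * ∑ k ∈ Finset.range n, nyW γ χ n k / γ k := by
      rw [Finset.mul_sum]
      exact Finset.sum_congr rfl (fun k _ => by ring)
    have h3 := boundF3 n
    calc ∑ k ∈ Finset.range K, (-C) * nyW γ χ n k / γ k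
        ≤ ∑ k ∈ Finset.range n, (-C) * nyW γ χ n k / γ k := h1
      _ = (-C) * ∑ k ∈ Finset.range n, nyW γ χ n k / γ k := h2
      _ ≤ (-C) * (Real.exp S - 1) := mul_le_mul_of_nonneg_left h3 (le_of_lt hCpos)
  · -- the equations
    intro j
    have hposden : ∀ k, j + 1 ≤ k → 0 < γ k - χ j := by
      intro k hk
      have := ny_clt hγ hint (show j < k by omega)
      linarith
    have hnegden : ∀ k, k ≤ j → 0 < χ j - γ k := by
      intro k hk
      have := ny_glt hγ hint hk
      linarith
    -- the basic finite identity
    have hQ : ∀ n, j + 1 ≤ n →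
        ∑ k ∈ Finset.Ico (j+1) n, (-C) * nyW γ χ n k / (γ k - χ j)
          = C + ∑ k ∈ Finset.range (j+1), (-C) * nyW γ χ n k / (χ j - γ k) := by
      intro n hn
      have hF2 := ny_F2 (χ := χ) hγ hint (show j < n by omega)
      have h1 : ∑ k ∈ Finset.range n, (-C) * nyW γ χ n k / (γ k - χ j) = C := by
        have : ∑ k ∈ Finset.range n, (-C) * nyW γ χ n k / (γ k - χ j)
            = (-C) * ∑ k ∈ Finset.range n, nyW γ χ n k / (γ k - χ j) := by
          rw [Finset.mul_sum]
          exact Finset.sum_congr rfl (fun k _ => by ring)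
        rw [this, hF2]
        ring
      have h2 : ∑ k ∈ Finset.range (j+1), (-C) * nyW γ χ n k / (γ k - χ j)
          + ∑ k ∈ Finset.Ico (j+1) n, (-C) * nyW γ χ n k / (γ k - χ j)
          = ∑ k ∈ Finset.range n, (-C) * nyW γ χ n k / (γ k - χ j) :=
        Finset.sum_range_add_sum_Ico _ hn
      have h3 : ∑ k ∈ Finset.range (j+1), (-C) * nyW γ χ n k / (γ k - χ j)
          = - ∑ k ∈ Finset.range (j+1), (-C) * nyW γ χ n k / (χ j - γ k) := by
        rw [← Finset.sum_neg_distrib]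
        refine Finset.sum_congr rfl (fun k _ => ?_)
        rw [show γ k - χ j = -(χ j - γ k) by ring, div_neg]
      rw [h3] at h2
      linarith
    -- B limit
    have hBlim : Tendsto (fun n => ∑ k ∈ Finset.range (j+1), (-C) * nyW γ χ n k / (χ j - γ k))
        atTop (𝓝 (∑ k ∈ Finset.range (j+1), (-C) * L k / (χ j - γ k))) := by
      refine tendsto_finset_sum _ (fun k _ => ?_)
      exact ((hten k).const_mul (-C)).div_const _
    set B : ℝ := ∑ k ∈ Finset.range (j+1), (-C) * L k / (χ j - γ k) with hB
    have hQlim : Tendsto (fun n => C + ∑ k ∈ Finset.range (j+1), (-C) * nyW γ χ n k / (χ j - γ k))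
        atTop (𝓝 (C + B)) := tendsto_const_nhds.add hBlim
    -- tail partial sums bounded
    have htailb : ∀ K, ∑ m ∈ Finset.range K, (-C) * L (m + (j+1)) / (γ (m + (j+1)) - χ j) ≤ C + B := by
      intro K
      have hlim2 : Tendsto (fun n => ∑ m ∈ Finset.range K,
          (-C) * nyW γ χ n (m + (j+1)) / (γ (m + (j+1)) - χ j)) atTop
          (𝓝 (∑ m ∈ Finset.range K, (-C) * L (m + (j+1)) / (γ (m + (j+1)) - χ j))) := by
        refine tendsto_finset_sum _ (fun m _ => ?_)
        exact ((hten (m + (j+1))).const_mul (-C)).div_const _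
      refine le_of_tendsto_of_tendsto hlim2 hQlim ?_
      filter_upwards [Filter.eventually_ge_atTop (K + (j+1))] with n hn
      have hstep1 : ∑ m ∈ Finset.range K, (-C) * nyW γ χ n (m + (j+1)) / (γ (m + (j+1)) - χ j)
          = ∑ k ∈ Finset.Ico (j+1) (K + (j+1)), (-C) * nyW γ χ n k / (γ k - χ j) := by
        rw [Finset.sum_Ico_eq_sum_range]
        have hKj : K + (j+1) - (j+1) = K := by omega
        rw [hKj]
        exact Finset.sum_congr rfl (fun m _ => by rw [Nat.add_comm (j+1) m])
      have hstep2 : ∑ k ∈ Finset.Ico (j+1) (K + (j+1)), (-C) * nyW γ χ n k / (γ k - χ j)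
          ≤ ∑ k ∈ Finset.Ico (j+1) n, (-C) * nyW γ χ n k / (γ k - χ j) := by
        refine Finset.sum_le_sum_of_subset_of_nonneg
          (Finset.Ico_subset_Ico le_rfl hn) ?_
        intro k hk _
        have hk1 := (Finset.mem_Ico.1 hk).1
        exact le_of_lt (div_pos (mul_pos hCpos (ny_W_pos hγ hint n k)) (hposden k hk1))
      rw [hstep1]
      calc ∑ k ∈ Finset.Ico (j+1) (K + (j+1)), (-C) * nyW γ χ n k / (γ k - χ j)
          ≤ ∑ k ∈ Finset.Ico (j+1) n, (-C) * nyW γ χ n k / (γ k - χ j) := hstep2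
        _ = C + ∑ k ∈ Finset.range (j+1), (-C) * nyW γ χ n k / (χ j - γ k) :=
            hQ n (by omega)
    have htailnn : ∀ m, 0 ≤ (-C) * L (m + (j+1)) / (γ (m + (j+1)) - χ j) := by
      intro m
      exact le_of_lt (div_pos (mul_pos hCpos (hLpos _)) (hposden _ (by omega)))
    have htail : Summable (fun m => (-C) * L (m + (j+1)) / (γ (m + (j+1)) - χ j)) :=
      summable_of_sum_range_le htailnn htailb
    have hT_le : ∑' m, (-C) * L (m + (j+1)) / (γ (m + (j+1)) - χ j) ≤ C + B :=
      Real.tsum_le_of_sum_range_le htailnn htailb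
    have hT_ge : C + B ≤ ∑' m, (-C) * L (m + (j+1)) / (γ (m + (j+1)) - χ j) := by
      refine le_of_tendsto hQlim ?_
      filter_upwards [Filter.eventually_ge_atTop (j+1)] with n hn
      have h1 : C + ∑ k ∈ Finset.range (j+1), (-C) * nyW γ χ n k / (χ j - γ k)
          = ∑ k ∈ Finset.Ico (j+1) n, (-C) * nyW γ χ n k / (γ k - χ j) := (hQ n hn).symm
      rw [h1]
      have h2 : ∑ k ∈ Finset.Ico (j+1) n, (-C) * nyW γ χ n k / (γ k - χ j)
          ≤ ∑ k ∈ Finset.Ico (j+1) n, (-C) * L k / (γ k - χ j) := by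
        refine Finset.sum_le_sum (fun k hk => ?_)
        obtain ⟨hk1, hk2⟩ := Finset.mem_Ico.1 hk
        have hWL := hWleL k n hk2
        exact (div_le_div_iff_of_pos_right (hposden k hk1)).2
          (mul_le_mul_of_nonneg_left hWL (le_of_lt hCpos))
      have h3 : ∑ k ∈ Finset.Ico (j+1) n, (-C) * L k / (γ k - χ j)
          = ∑ m ∈ Finset.range (n - (j+1)), (-C) * L (m + (j+1)) / (γ (m + (j+1)) - χ j) := by
        rw [Finset.sum_Ico_eq_sum_range]
        exact Finset.sum_congr rfl (fun m _ => by rw [Nat.add_comm (j+1) m])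
      have h4 : ∑ m ∈ Finset.range (n - (j+1)), (-C) * L (m + (j+1)) / (γ (m + (j+1)) - χ j)
          ≤ ∑' m, (-C) * L (m + (j+1)) / (γ (m + (j+1)) - χ j) :=
        Summable.sum_le_tsum _ (fun m _ => htailnn m) htail
      linarith
    have hT : ∑' m, (-C) * L (m + (j+1)) / (γ (m + (j+1)) - χ j) = C + B :=
      le_antisymm hT_le hT_ge
    have hg : Summable (fun k => (-C) * L k / (γ k - χ j)) :=
      (summable_nat_add_iff (j+1)).1 htail
    have hsplit := Summable.sum_add_tsum_nat_add (f := fun k => (-C) * L k / (γ k - χ j)) (j+1) hg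
    have hneg : ∑ k ∈ Finset.range (j+1), (-C) * L k / (γ k - χ j) = -B := by
      rw [hB, ← Finset.sum_neg_distrib]
      refine Finset.sum_congr rfl (fun k hk => ?_)
      rw [show γ k - χ j = -(χ j - γ k) by ring, div_neg]
    show ∑' k, (-C) * L k / (γ k - χ j) = C
    rw [← hsplit, hneg, hT]
    ring

/-- Nazarov–Yuditskii theorem, case `C < 0`: for positive poles `γ_k ↑ ∞` and points `χ`
interlacing from above (`γ_k < χ_k < γ_{k+1}`), the `χ` arise as solutions of
`∑' ν_k/(γ_k - λ) = C` for some positive weights `ν` with `∑ ν_k/γ_k < ∞`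
iff `∑ (χ_k/γ_k - 1) < ∞`. -/
theorem stmt_7 (γ χ : ℕ → ℝ) (hγ : StrictMono γ) (hγpos : ∀ k, 0 < γ k)
    (hγtop : Filter.Tendsto γ Filter.atTop Filter.atTop)
    (C : ℝ) (hC : C < 0)
    (hint : ∀ k, γ k < χ k ∧ χ k < γ (k + 1)) :
    (∃ ν : ℕ → ℝ, (∀ k, 0 < ν k) ∧ Summable (fun k => ν k / γ k) ∧
        ∀ j, (∑' k, ν k / (γ k - χ j)) = C)
      ↔ Summable (fun k => χ k / γ k - 1) := by
  constructor
  · rintro ⟨ν, hν, hsum, heq⟩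
    exact ny_forward γ χ hγ hγpos C hC hint ν hν hsum heq
  · intro hs
    exact ny_reverse γ χ hγ hγpos C hC hint hs
end

section
/- (Integral form of the Atiyah–Hitchin bracket computation for Weyl functions) Let λ ≠ μ be real, let g : [−2,2] → ℝ be continuous, let 𝒥 : [−2,2] → ℝ be differentiable and nowhere vanishing, let N₀, Ω_λ, Ω_μ be real numbers, and let u, w : [−2,2] → ℝ be twice continuously differentiable functions satisfying u'' + λ g u = 0 and w'' + μ g w = 0 on [−2,2], with boundary data u(−2) = Ω_λ, u'(−2) = −1, w(−2) = Ω_μ, w'(−2) = −1, and N₀ u'(2) + u(2) = 0, N₀ w'(2) + w(2) = 0. Then ∫_{−2}^{2} [ w(ξ)² g(ξ) 𝒥(ξ) (u²/𝒥)'(ξ) − u(ξ)² g(ξ) 𝒥(ξ) (w²/𝒥)'(ξ) ] dξ = (Ω_λ − Ω_μ)² / (λ − μ). -/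
/-- Integral form of the Atiyah–Hitchin bracket computation for Weyl functions:
for Weyl solutions `u, w` of the string equation at parameters `λ ≠ μ` with mixed
boundary condition `N₀ χ'(2) + χ(2) = 0` and `χ(-2) = Ω`, `χ'(-2) = -1`,
the integral of the Wronskian-square expression equals `(Ω_λ - Ω_μ)²/(λ - μ)`. -/
theorem stmt_9 (lam μ : ℝ) (hlm : lam ≠ μ) (g J u w : ℝ → ℝ)
    (N₀ Ωl Ωm : ℝ)
    (hg : ContinuousOn g (Set.Icc (-2) 2))
    (hJ : Differentiable ℝ J) (hJ0 : ∀ ξ ∈ Set.Icc (-2 : ℝ) 2, J ξ ≠ 0)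
    (hu : ContDiff ℝ 2 u) (hw : ContDiff ℝ 2 w)
    (huode : ∀ ξ ∈ Set.Icc (-2 : ℝ) 2, deriv (deriv u) ξ + lam * g ξ * u ξ = 0)
    (hwode : ∀ ξ ∈ Set.Icc (-2 : ℝ) 2, deriv (deriv w) ξ + μ * g ξ * w ξ = 0)
    (hu1 : u (-2) = Ωl) (hu2 : deriv u (-2) = -1)
    (hw1 : w (-2) = Ωm) (hw2 : deriv w (-2) = -1)
    (hubc : N₀ * deriv u 2 + u 2 = 0) (hwbc : N₀ * deriv w 2 + w 2 = 0) :
    ∫ ξ in (-2 : ℝ)..2,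
        (w ξ ^ 2 * g ξ * J ξ * deriv (fun t => u t ^ 2 / J t) ξ
          - u ξ ^ 2 * g ξ * J ξ * deriv (fun t => w t ^ 2 / J t) ξ)
      = (Ωl - Ωm) ^ 2 / (lam - μ) := by
  have hle : (-2 : ℝ) ≤ 2 := by norm_num
  have huicc : Set.uIcc (-2 : ℝ) 2 = Set.Icc (-2 : ℝ) 2 := Set.uIcc_of_le hle
  have hlm' : lam - μ ≠ 0 := sub_ne_zero.mpr hlm
  have hdu : Differentiable ℝ u := hu.differentiable (by norm_num)
  have hdw : Differentiable ℝ w := hw.differentiable (by norm_num)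
  have hdu' : Differentiable ℝ (deriv u) := (hu.iterate_deriv' 1 1).differentiable (by norm_num)
  have hdw' : Differentiable ℝ (deriv w) := (hw.iterate_deriv' 1 1).differentiable (by norm_num)
  set W : ℝ → ℝ := fun ξ => u ξ * deriv w ξ - deriv u ξ * w ξ with hWdef
  set f : ℝ → ℝ := fun ξ => -2 * g ξ * u ξ * w ξ * W ξ with hfdef
  set F : ℝ → ℝ := fun ξ => -(W ξ) ^ 2 / (lam - μ) with hFdef
  -- pointwise equality of the integrand with f on Icc
  have hEq : Set.EqOn (fun ξ =>
      (w ξ ^ 2 * g ξ * J ξ * deriv (fun t => u t ^ 2 / J t) ξ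
        - u ξ ^ 2 * g ξ * J ξ * deriv (fun t => w t ^ 2 / J t) ξ)) f
      (Set.uIcc (-2 : ℝ) 2) := by
    intro ξ hξ
    rw [huicc] at hξ
    have hJξ : J ξ ≠ 0 := hJ0 ξ hξ
    have hdu2 : deriv (fun t => u t ^ 2 / J t) ξ
        = ((2 * u ξ ^ 1 * deriv u ξ) * J ξ - u ξ ^ 2 * deriv J ξ) / J ξ ^ 2 :=
      (((hdu ξ).hasDerivAt.pow 2).div (hJ ξ).hasDerivAt hJξ).deriv
    have hdw2 : deriv (fun t => w t ^ 2 / J t) ξ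
        = ((2 * w ξ ^ 1 * deriv w ξ) * J ξ - w ξ ^ 2 * deriv J ξ) / J ξ ^ 2 :=
      (((hdw ξ).hasDerivAt.pow 2).div (hJ ξ).hasDerivAt hJξ).deriv
    simp only [hfdef, hWdef, hdu2, hdw2]
    field_simp
    ring
  rw [intervalIntegral.integral_congr hEq]
  -- continuity of f on Icc
  have hcf : ContinuousOn f (Set.Icc (-2 : ℝ) 2) := by
    have hcW : Continuous W :=
      (hdu.continuous.mul hdw'.continuous).sub (hdu'.continuous.mul hdw.continuous)
    exact ((((continuousOn_const.mul hg).mul hdu.continuous.continuousOn).mul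
      hdw.continuous.continuousOn).mul hcW.continuousOn)
  have hint : IntervalIntegrable f MeasureTheory.volume (-2 : ℝ) 2 := by
    rw [← huicc] at hcf
    exact hcf.intervalIntegrable
  -- FTC
  have hderiv : ∀ ξ ∈ Set.uIcc (-2 : ℝ) 2, HasDerivAt F (f ξ) ξ := by
    intro ξ hξ
    rw [huicc] at hξ
    have hu'' := huode ξ hξ
    have hw'' := hwode ξ hξ
    have hW : HasDerivAt W (u ξ * deriv (deriv w) ξ - deriv (deriv u) ξ * w ξ) ξ := by
      have h1 := ((hdu ξ).hasDerivAt.mul (hdw' ξ).hasDerivAt).sub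
        ((hdu' ξ).hasDerivAt.mul (hdw ξ).hasDerivAt)
      refine h1.congr_deriv ?_
      ring
    have hF : HasDerivAt F (-(2 * W ξ ^ 1 * (u ξ * deriv (deriv w) ξ - deriv (deriv u) ξ * w ξ))
        / (lam - μ)) ξ := ((hW.pow 2).neg).div_const _
    convert hF using 1
    have h1 : deriv (deriv u) ξ = -(lam * g ξ * u ξ) := by linarith
    have h2 : deriv (deriv w) ξ = -(μ * g ξ * w ξ) := by linarith
    simp only [hfdef, hWdef, h1, h2]
    field_simp
    ring
  rw [intervalIntegral.integral_eq_sub_of_hasDerivAt hderiv hint]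
  -- boundary values
  have hW2 : W 2 = 0 := by
    have h1 : u 2 = -(N₀ * deriv u 2) := by linarith
    have h2 : w 2 = -(N₀ * deriv w 2) := by linarith
    simp only [hWdef, h1, h2]
    ring
  have hWm2 : W (-2) = Ωm - Ωl := by
    simp only [hWdef, hu1, hu2, hw1, hw2]
    ring
  simp only [hFdef, hW2, hWm2]
  field_simp
  ring
end

section
/- (Liouville transformation) Let m : ℝ → ℝ be continuous, let λ ∈ ℝ, and let f : ℝ → ℝ be twice differentiable with f''(x) − (1/4) f(x) + λ m(x) f(x) = 0 for all x ∈ ℝ. For ξ ∈ (−2,2) set x(ξ) = 2·artanh(ξ/2), h(ξ) = f(x(ξ)) / cosh(x(ξ)/2), and g(ξ) = m(x(ξ)) · cosh⁴(x(ξ)/2). Then h is twice differentiable on (−2,2) and h''(ξ) + λ g(ξ) h(ξ) = 0 for all ξ ∈ (−2,2). -/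
/-- Liouville transformation: if `f'' - f/4 + λ m f = 0` on ℝ, then with
`x(ξ) = 2 artanh(ξ/2) = log((1+ξ/2)/(1-ξ/2))`, `h(ξ) = f(x(ξ))/cosh(x(ξ)/2)`,
`g(ξ) = m(x(ξ)) cosh⁴(x(ξ)/2)`, the function `h` is twice differentiable on `(-2,2)`
and satisfies `h'' + λ g h = 0` there. -/
theorem stmt_10 (m : ℝ → ℝ) (hm : Continuous m) (lam : ℝ) (f : ℝ → ℝ)
    (hf : Differentiable ℝ f) (hf' : Differentiable ℝ (deriv f))
    (hode : ∀ y : ℝ, deriv (deriv f) y - (1 / 4) * f y + lam * m y * f y = 0)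
    (x h g : ℝ → ℝ)
    (hx : ∀ ξ, x ξ = Real.log ((1 + ξ / 2) / (1 - ξ / 2)))
    (hh : ∀ ξ, h ξ = f (x ξ) / Real.cosh (x ξ / 2))
    (hg : ∀ ξ, g ξ = m (x ξ) * Real.cosh (x ξ / 2) ^ 4) :
    (∀ ξ ∈ Set.Ioo (-2 : ℝ) 2,
        DifferentiableAt ℝ h ξ ∧ DifferentiableAt ℝ (deriv h) ξ) ∧
    (∀ ξ ∈ Set.Ioo (-2 : ℝ) 2, deriv (deriv h) ξ + lam * g ξ * h ξ = 0) := by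
  classical
  set X : ℝ → ℝ := fun ξ => Real.log (1 + ξ / 2) - Real.log (1 - ξ / 2) with hXdef
  set s : ℝ → ℝ := fun ξ => Real.sqrt (1 - ξ ^ 2 / 4) with hsdef
  -- basic positivity facts
  have hp1 : ∀ ξ ∈ Set.Ioo (-2 : ℝ) 2, (0 : ℝ) < 1 + ξ / 2 := by
    rintro ξ ⟨h1, h2⟩; linarith
  have hp2 : ∀ ξ ∈ Set.Ioo (-2 : ℝ) 2, (0 : ℝ) < 1 - ξ / 2 := by
    rintro ξ ⟨h1, h2⟩; linarith
  have hq : ∀ ξ ∈ Set.Ioo (-2 : ℝ) 2, (0 : ℝ) < 1 - ξ ^ 2 / 4 := by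
    rintro ξ ⟨h1, h2⟩; nlinarith
  have hs_pos : ∀ ξ ∈ Set.Ioo (-2 : ℝ) 2, 0 < s ξ := by
    intro ξ hξ; exact Real.sqrt_pos.mpr (hq ξ hξ)
  have hs_sq : ∀ ξ ∈ Set.Ioo (-2 : ℝ) 2, s ξ ^ 2 = 1 - ξ ^ 2 / 4 := by
    intro ξ hξ; exact Real.sq_sqrt (hq ξ hξ).le
  -- x agrees with X on the interval
  have hxX : ∀ ξ ∈ Set.Ioo (-2 : ℝ) 2, x ξ = X ξ := by
    intro ξ hξ
    rw [hx, Real.log_div (hp1 ξ hξ).ne' (hp2 ξ hξ).ne']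
  -- exp of half a log
  have exp_half : ∀ a : ℝ, 0 < a → Real.exp (Real.log a / 2) = Real.sqrt a := by
    intro a ha
    have h2 : Real.exp (Real.log a / 2) ^ 2 = a := by
      rw [sq, ← Real.exp_add, add_halves, Real.exp_log ha]
    symm
    conv_lhs => rw [← h2]
    exact Real.sqrt_sq (Real.exp_pos _).le
  -- cosh in terms of s
  have hcosh : ∀ ξ ∈ Set.Ioo (-2 : ℝ) 2, Real.cosh (X ξ / 2) = (s ξ)⁻¹ := by
    intro ξ hξ
    have ha := hp1 ξ hξ
    have hb := hp2 ξ hξ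
    have hX2 : X ξ / 2 = Real.log (1 + ξ / 2) / 2 - Real.log (1 - ξ / 2) / 2 := by
      simp only [hXdef]; ring
    have he1 : Real.exp (X ξ / 2) = Real.sqrt (1 + ξ / 2) / Real.sqrt (1 - ξ / 2) := by
      rw [hX2, Real.exp_sub, exp_half _ ha, exp_half _ hb]
    have he2 : Real.exp (-(X ξ / 2)) = Real.sqrt (1 - ξ / 2) / Real.sqrt (1 + ξ / 2) := by
      have : -(X ξ / 2) = Real.log (1 - ξ / 2) / 2 - Real.log (1 + ξ / 2) / 2 := by
        simp only [hXdef]; ring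
      rw [this, Real.exp_sub, exp_half _ ha, exp_half _ hb]
    have hsab : s ξ = Real.sqrt (1 + ξ / 2) * Real.sqrt (1 - ξ / 2) := by
      rw [hsdef]
      simp only
      rw [← Real.sqrt_mul ha.le]
      congr 1; ring
    have hsa : (0:ℝ) < Real.sqrt (1 + ξ / 2) := Real.sqrt_pos.mpr ha
    have hsb : (0:ℝ) < Real.sqrt (1 - ξ / 2) := Real.sqrt_pos.mpr hb
    have hsa2 : Real.sqrt (1 + ξ / 2) ^ 2 = 1 + ξ / 2 := Real.sq_sqrt ha.le
    have hsb2 : Real.sqrt (1 - ξ / 2) ^ 2 = 1 - ξ / 2 := Real.sq_sqrt hb.le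
    rw [Real.cosh_eq, he1, he2, hsab]
    have key : Real.sqrt (1 + ξ / 2) / Real.sqrt (1 - ξ / 2)
        + Real.sqrt (1 - ξ / 2) / Real.sqrt (1 + ξ / 2)
        = 2 / (Real.sqrt (1 + ξ / 2) * Real.sqrt (1 - ξ / 2)) := by
      rw [div_add_div _ _ hsb.ne' hsa.ne']
      have hnum : Real.sqrt (1 + ξ / 2) * Real.sqrt (1 + ξ / 2)
          + Real.sqrt (1 - ξ / 2) * Real.sqrt (1 - ξ / 2) = 2 := by
        nlinarith [hsa2, hsb2]
      rw [hnum, mul_comm]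
    rw [key, div_div, mul_comm (Real.sqrt (1 + ξ / 2) * Real.sqrt (1 - ξ / 2)) 2,
      ← div_div, div_self (two_ne_zero), one_div]
  -- h in terms of f, X, s
  have hhH : ∀ ξ ∈ Set.Ioo (-2 : ℝ) 2, h ξ = f (X ξ) * s ξ := by
    intro ξ hξ
    rw [hh, hxX ξ hξ, hcosh ξ hξ, div_eq_mul_inv, inv_inv]
  -- derivative of X
  have hX' : ∀ ξ ∈ Set.Ioo (-2 : ℝ) 2, HasDerivAt X ((1 - ξ ^ 2 / 4)⁻¹) ξ := by
    intro ξ hξ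
    have d1 : HasDerivAt (fun t : ℝ => 1 + t / 2) (1 / 2) ξ := by
      simpa using ((hasDerivAt_id ξ).div_const 2).const_add (1 : ℝ)
    have d2 : HasDerivAt (fun t : ℝ => 1 - t / 2) (-(1 / 2)) ξ := by
      simpa using ((hasDerivAt_id ξ).div_const 2).const_sub (1 : ℝ)
    have := (d1.log (hp1 ξ hξ).ne').sub (d2.log (hp2 ξ hξ).ne')
    refine this.congr_deriv ?_
    have h1 := (hp1 ξ hξ).ne'
    have h2 := (hp2 ξ hξ).ne'
    have h4 : (2 : ℝ) + ξ ≠ 0 := by intro hc; rw [show (1:ℝ) + ξ/2 = (2 + ξ)/2 by ring, hc] at h1; simp at h1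
    have h5 : (2 : ℝ) - ξ ≠ 0 := by intro hc; rw [show (1:ℝ) - ξ/2 = (2 - ξ)/2 by ring, hc] at h2; simp at h2
    have h6 : (4 : ℝ) - ξ ^ 2 ≠ 0 := by
      intro hc
      apply h4
      rcases mul_eq_zero.mp (show ((2:ℝ) + ξ) * (2 - ξ) = 0 by nlinarith) with hh' | hh'
      · exact hh'
      · exact absurd hh' h5
    field_simp
    ring
  -- derivative of s
  have hs' : ∀ ξ ∈ Set.Ioo (-2 : ℝ) 2, HasDerivAt s (-ξ / (4 * s ξ)) ξ := by
    intro ξ hξ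
    have dq : HasDerivAt (fun t : ℝ => 1 - t ^ 2 / 4) (-ξ / 2) ξ := by
      have := ((hasDerivAt_pow 2 ξ).div_const 4).const_sub (1 : ℝ)
      refine this.congr_deriv ?_
      ring
    have := dq.sqrt (hq ξ hξ).ne'
    refine this.congr_deriv ?_
    rw [hsdef]
    simp only
    ring
  -- first derivative function
  set H1 : ℝ → ℝ := fun ξ => deriv f (X ξ) / s ξ - f (X ξ) * ξ / (4 * s ξ) with hH1def
  have hder1 : ∀ ξ ∈ Set.Ioo (-2 : ℝ) 2,
      HasDerivAt (fun t => f (X t) * s t) (H1 ξ) ξ := by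
    intro ξ hξ
    have dfX : HasDerivAt (fun t => f (X t))
        (deriv f (X ξ) * (1 - ξ ^ 2 / 4)⁻¹) ξ :=
      (hf (X ξ)).hasDerivAt.comp ξ (hX' ξ hξ)
    have := dfX.mul (hs' ξ hξ)
    refine this.congr_deriv ?_
    have hsne := (hs_pos ξ hξ).ne'
    rw [hH1def]
    simp only
    rw [← hs_sq ξ hξ]
    field_simp
    ring
  have hhder : ∀ ξ ∈ Set.Ioo (-2 : ℝ) 2, HasDerivAt h (H1 ξ) ξ := by
    intro ξ hξ
    have heq : h =ᶠ[nhds ξ] fun t => f (X t) * s t := by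
      filter_upwards [isOpen_Ioo.mem_nhds hξ] with t ht using hhH t ht
    exact (hder1 ξ hξ).congr_of_eventuallyEq heq
  have hderiv_h : ∀ ξ ∈ Set.Ioo (-2 : ℝ) 2, deriv h ξ = H1 ξ := by
    intro ξ hξ; exact (hhder ξ hξ).deriv
  -- second derivative
  have hder2 : ∀ ξ ∈ Set.Ioo (-2 : ℝ) 2,
      HasDerivAt H1 ((deriv (deriv f) (X ξ) - f (X ξ) / 4) / s ξ ^ 3) ξ := by
    intro ξ hξ
    have hsne := (hs_pos ξ hξ).ne'
    have dfX : HasDerivAt (fun t => deriv f (X t))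
        (deriv (deriv f) (X ξ) * (1 - ξ ^ 2 / 4)⁻¹) ξ :=
      (hf' (X ξ)).hasDerivAt.comp ξ (hX' ξ hξ)
    have dFX : HasDerivAt (fun t => f (X t))
        (deriv f (X ξ) * (1 - ξ ^ 2 / 4)⁻¹) ξ :=
      (hf (X ξ)).hasDerivAt.comp ξ (hX' ξ hξ)
    have term1 := dfX.div (hs' ξ hξ) hsne
    have numer : HasDerivAt (fun t => f (X t) * t)
        (deriv f (X ξ) * (1 - ξ ^ 2 / 4)⁻¹ * ξ + f (X ξ) * 1) ξ :=
      dFX.mul (hasDerivAt_id ξ)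
    have denom : HasDerivAt (fun t => 4 * s t) (4 * (-ξ / (4 * s ξ))) ξ :=
      (hs' ξ hξ).const_mul 4
    have hdne : (4 : ℝ) * s ξ ≠ 0 := by positivity
    have term2 := numer.div denom hdne
    have total := term1.sub term2
    refine total.congr_deriv ?_
    symm
    rw [← hs_sq ξ hξ]
    field_simp
    linear_combination 4 * f (X ξ) * (hs_sq ξ hξ)
  have hhder2 : ∀ ξ ∈ Set.Ioo (-2 : ℝ) 2,
      HasDerivAt (deriv h) ((deriv (deriv f) (X ξ) - f (X ξ) / 4) / s ξ ^ 3) ξ := by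
    intro ξ hξ
    have heq : deriv h =ᶠ[nhds ξ] H1 := by
      filter_upwards [isOpen_Ioo.mem_nhds hξ] with t ht using hderiv_h t ht
    exact (hder2 ξ hξ).congr_of_eventuallyEq heq
  refine ⟨fun ξ hξ => ⟨(hhder ξ hξ).differentiableAt, (hhder2 ξ hξ).differentiableAt⟩,
    fun ξ hξ => ?_⟩
  have hsne := (hs_pos ξ hξ).ne'
  have hd2 : deriv (deriv h) ξ = (deriv (deriv f) (X ξ) - f (X ξ) / 4) / s ξ ^ 3 :=
    (hhder2 ξ hξ).deriv
  have hode' := hode (X ξ)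
  rw [hd2, hg, hxX ξ hξ, hcosh ξ hξ, hhH ξ hξ]
  field_simp
  linear_combination 4 * hode'
end

section
/- (Transformation of the resolvent kernel under the Liouville substitution) Let m : ℝ → ℝ be continuous and nonnegative with ∫_ℝ m(x) e^{|x|} dx < ∞, and define v(x) = (1/2) ∫_ℝ e^{−|x−y|} m(y) dy. For ξ ∈ (−2,2) set x(ξ) = 2·artanh(ξ/2), k(ξ) = v(x(ξ)) cosh⁴(x(ξ)/2), and g(ξ) = m(x(ξ)) cosh⁴(x(ξ)/2). Then for every ξ ∈ (−2,2): k(ξ) = (1/2) ∫_{−2}^{2} ℛ(ξ,η) g(η) dη, where 𝒥(ξ) = 1 − ξ²/4 and ℛ(ξ,η) = ((1+η/2)/(1+ξ/2))² / 𝒥(ξ) for η ≤ ξ, and ℛ(ξ,η) = ((1−η/2)/(1−ξ/2))² / 𝒥(ξ) for η ≥ ξ. -/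
set_option maxHeartbeats 1000000

noncomputable def Fmap (t : ℝ) : ℝ := Real.log ((1 + t / 2) / (1 - t / 2))

lemma Fa_pos {t : ℝ} (h : t ∈ Set.Ioo (-2:ℝ) 2) : 0 < 1 + t / 2 := by
  have := h.1; linarith

lemma Fb_pos {t : ℝ} (h : t ∈ Set.Ioo (-2:ℝ) 2) : 0 < 1 - t / 2 := by
  have := h.2; linarith

lemma exp_Fmap {t : ℝ} (h : t ∈ Set.Ioo (-2:ℝ) 2) :
    Real.exp (Fmap t) = (1 + t / 2) / (1 - t / 2) :=
  Real.exp_log (div_pos (Fa_pos h) (Fb_pos h))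

lemma cosh_half_sq (X : ℝ) :
    Real.cosh (X / 2) ^ 2 = (Real.exp X + Real.exp (-X) + 2) / 4 := by
  rw [Real.cosh_eq]
  have h1 : Real.exp (X/2) * Real.exp (X/2) = Real.exp X := by
    rw [← Real.exp_add]; ring_nf
  have h2 : Real.exp (-(X/2)) * Real.exp (-(X/2)) = Real.exp (-X) := by
    rw [← Real.exp_add]; ring_nf
  have h3 : Real.exp (X/2) * Real.exp (-(X/2)) = 1 := by
    rw [← Real.exp_add]; simp
  nlinarith [h1, h2, h3]

lemma cosh_sq_Fmap {t : ℝ} (h : t ∈ Set.Ioo (-2:ℝ) 2) :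
    Real.cosh (Fmap t / 2) ^ 2 = 1 / ((1 + t / 2) * (1 - t / 2)) := by
  have ha := Fa_pos h; have hb := Fb_pos h
  have h2 : (2:ℝ) - t ≠ 0 := by linarith
  have h3 : (2:ℝ) + t ≠ 0 := by linarith
  have h4 : (4:ℝ) - t^2 ≠ 0 := by nlinarith
  rw [cosh_half_sq, exp_Fmap h, Real.exp_neg, exp_Fmap h]
  field_simp [h2, h3, h4]
  ring

lemma Fmap_strictMono : StrictMonoOn Fmap (Set.Ioo (-2:ℝ) 2) := by
  intro s hs t ht hst
  have has := Fa_pos hs; have hbs := Fb_pos hs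
  have hat := Fa_pos ht; have hbt := Fb_pos ht
  apply Real.log_lt_log (div_pos has hbs)
  rw [div_lt_div_iff₀ hbs hbt]
  nlinarith

lemma Fmap_hasDerivAt {t : ℝ} (ht : t ∈ Set.Ioo (-2:ℝ) 2) :
    HasDerivAt Fmap (1 / ((1 + t / 2) * (1 - t / 2))) t := by
  have ha := Fa_pos ht; have hb := Fb_pos ht
  have h2 : (2:ℝ) - t ≠ 0 := by linarith
  have h3 : (2:ℝ) + t ≠ 0 := by linarith
  have h4 : (4:ℝ) - t^2 ≠ 0 := by nlinarith
  have h1 : HasDerivAt (fun s : ℝ => 1 + s / 2) (1/2) t := by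
    simpa using ((hasDerivAt_id t).div_const 2).const_add 1
  have h2' : HasDerivAt (fun s : ℝ => 1 - s / 2) (-(1/2)) t := by
    simpa using ((hasDerivAt_id t).div_const 2).const_sub 1
  have h3' : HasDerivAt (fun s : ℝ => (1 + s / 2) / (1 - s / 2))
      (1 / (1 - t/2)^2) t := by
    have h := h1.div h2' hb.ne'
    convert h using 1
    · rfl
    · rfl
    congr 1
    ring
  have h4' := h3'.log (by positivity)
  convert h4' using 1
  · rfl
  rw [eq_div_iff (div_pos ha hb).ne']
  field_simp [h2, h3, h4]

lemma Fmap_image : Fmap '' (Set.Ioo (-2:ℝ) 2) = Set.univ := by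
  apply Set.eq_univ_of_forall
  intro y
  have hE : 0 < Real.exp y := Real.exp_pos y
  refine ⟨2 * (Real.exp y - 1) / (Real.exp y + 1), ⟨?_, ?_⟩, ?_⟩
  · rw [lt_div_iff₀ (by linarith)]; nlinarith
  · rw [div_lt_iff₀ (by linarith)]; nlinarith
  · unfold Fmap
    have harg : (1 + 2 * (Real.exp y - 1) / (Real.exp y + 1) / 2) /
        (1 - 2 * (Real.exp y - 1) / (Real.exp y + 1) / 2) = Real.exp y := by
      have h1 : Real.exp y + 1 ≠ 0 := by positivity
      rw [div_eq_iff (by rw [sub_ne_zero]; intro hcon; field_simp at hcon; linarith)]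
      field_simp
      ring
    rw [harg, Real.log_exp]

/-- Transformation of the resolvent kernel under the Liouville substitution:
with `v = R[m]`, `x(ξ) = 2 artanh(ξ/2) = log((1+ξ/2)/(1-ξ/2))`,
`k(ξ) = v(x(ξ)) cosh⁴(x(ξ)/2)`, `g(ξ) = m(x(ξ)) cosh⁴(x(ξ)/2)`, one has
`k(ξ) = (1/2) ∫_{-2}^{2} ℛ(ξ,η) g(η) dη` on `(-2,2)`, where `ℛ` is the
transformed kernel of `R`. -/
theorem stmt_12 (m : ℝ → ℝ) (hm : Continuous m) (hm0 : ∀ y, 0 ≤ m y)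
    (hint : MeasureTheory.Integrable (fun y => m y * Real.exp |y|))
    (v : ℝ → ℝ)
    (hv : ∀ y : ℝ, v y = (1 / 2) * ∫ z : ℝ, Real.exp (-|y - z|) * m z)
    (x k g J : ℝ → ℝ) (R : ℝ → ℝ → ℝ)
    (hx : ∀ ξ, x ξ = Real.log ((1 + ξ / 2) / (1 - ξ / 2)))
    (hk : ∀ ξ, k ξ = v (x ξ) * Real.cosh (x ξ / 2) ^ 4)
    (hg : ∀ ξ, g ξ = m (x ξ) * Real.cosh (x ξ / 2) ^ 4)
    (hJ : ∀ ξ, J ξ = 1 - ξ ^ 2 / 4)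
    (hR1 : ∀ ξ η, η ≤ ξ → R ξ η = ((1 + η / 2) / (1 + ξ / 2)) ^ 2 / J ξ)
    (hR2 : ∀ ξ η, ξ ≤ η → R ξ η = ((1 - η / 2) / (1 - ξ / 2)) ^ 2 / J ξ) :
    ∀ ξ ∈ Set.Ioo (-2 : ℝ) 2,
      k ξ = (1 / 2) * ∫ η in Set.Ioo (-2 : ℝ) 2, R ξ η * g η := by
  have hxF : x = Fmap := funext hx
  intro ξ hξ
  have ha := Fa_pos hξ; have hb := Fb_pos hξ
  have hC4 : Real.cosh (Fmap ξ / 2) ^ 4 = (1 / ((1 + ξ/2) * (1 - ξ/2)))^2 := by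
    rw [show (4:ℕ) = 2*2 from rfl, pow_mul, cosh_sq_Fmap hξ]
  have hcv := MeasureTheory.integral_image_eq_integral_abs_deriv_smul
      (f' := fun η : ℝ => 1 / ((1 + η / 2) * (1 - η / 2)))
      (measurableSet_Ioo : MeasurableSet (Set.Ioo (-2:ℝ) 2))
      (fun η hη => (Fmap_hasDerivAt hη).hasDerivWithinAt)
      Fmap_strictMono.injOn
      (fun z => Real.cosh (Fmap ξ / 2) ^ 4 * (Real.exp (-|Fmap ξ - z|) * m z))
  rw [Fmap_image, MeasureTheory.setIntegral_univ] at hcv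
  have key : ∫ z : ℝ, Real.cosh (Fmap ξ / 2) ^ 4 * (Real.exp (-|Fmap ξ - z|) * m z)
      = ∫ η in Set.Ioo (-2:ℝ) 2, R ξ η * g η := by
    rw [hcv]
    apply MeasureTheory.setIntegral_congr_fun measurableSet_Ioo
    intro η hη
    have haη := Fa_pos hη; have hbη := Fb_pos hη
    have a1 : (2:ℝ) + ξ ≠ 0 := by linarith
    have a2 : (2:ℝ) - ξ ≠ 0 := by linarith
    have a3 : (2:ℝ) + η ≠ 0 := by linarith
    have a4 : (2:ℝ) - η ≠ 0 := by linarith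
    have hcoshη : Real.cosh (Fmap η / 2) ^ 4 = (1/((1+η/2)*(1-η/2)))^2 := by
      rw [show (4:ℕ) = 2*2 from rfl, pow_mul, cosh_sq_Fmap hη]
    simp only [smul_eq_mul]
    rw [hg, hxF, hcoshη, hC4]
    rw [abs_of_pos (by positivity)]
    rcases le_total η ξ with hle | hle
    · rw [hR1 ξ η hle, hJ]
      have hxle : Fmap η ≤ Fmap ξ := Fmap_strictMono.monotoneOn hη hξ hle
      rw [abs_of_nonneg (by linarith), neg_sub, Real.exp_sub, exp_Fmap hξ, exp_Fmap hη]
      have hJ' : 1 - ξ^2/4 = (1+ξ/2)*(1-ξ/2) := by ring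
      rw [hJ']
      field_simp [a1, a2, a3, a4]
    · rw [hR2 ξ η hle, hJ]
      have hxle : Fmap ξ ≤ Fmap η := Fmap_strictMono.monotoneOn hξ hη hle
      rw [abs_of_nonpos (by linarith), neg_neg, Real.exp_sub, exp_Fmap hξ, exp_Fmap hη]
      have hJ' : 1 - ξ^2/4 = (1+ξ/2)*(1-ξ/2) := by ring
      rw [hJ']
      field_simp [a1, a2, a3, a4]
  rw [hk, hxF, hv]
  rw [show (1 / 2 * ∫ z : ℝ, Real.exp (-|Fmap ξ - z|) * m z) * Real.cosh (Fmap ξ / 2) ^ 4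
      = 1 / 2 * ∫ z : ℝ, Real.cosh (Fmap ξ / 2) ^ 4 * (Real.exp (-|Fmap ξ - z|) * m z) from by
      rw [MeasureTheory.integral_const_mul]; ring, key]
end

section
/- (Self-adjointness of the transformed resolvent with weight 𝒥³) Let 𝒥(ξ) = 1 − ξ²/4 and let ℛ(ξ,η) = ((1+η/2)/(1+ξ/2))²/𝒥(ξ) for η ≤ ξ and ℛ(ξ,η) = ((1−η/2)/(1−ξ/2))²/𝒥(ξ) for η ≥ ξ, and define ℛ[g](ξ) = (1/2)∫_{−2}^{2} ℛ(ξ,η) g(η) dη. Then for all continuous functions f, g : [−2,2] → ℝ: ∫_{−2}^{2} ℛ[g](ξ) f(ξ) 𝒥(ξ)³ dξ = ∫_{−2}^{2} g(ξ) ℛ[f](ξ) 𝒥(ξ)³ dξ. -/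
open MeasureTheory Set

/-- Self-adjointness of the transformed resolvent with weight `𝒥³`: for the kernel
`ℛ` obtained from `(1/2)e^{-|x-y|}` under the Liouville substitution and any continuous
`f, g` on `[-2,2]`, `∫ ℛ[g] f 𝒥³ dξ = ∫ g ℛ[f] 𝒥³ dξ`. -/
theorem stmt_14 (J : ℝ → ℝ) (hJ : ∀ ξ, J ξ = 1 - ξ ^ 2 / 4)
    (R : ℝ → ℝ → ℝ)
    (hR1 : ∀ ξ η, η ≤ ξ → R ξ η = ((1 + η / 2) / (1 + ξ / 2)) ^ 2 / J ξ)
    (hR2 : ∀ ξ η, ξ ≤ η → R ξ η = ((1 - η / 2) / (1 - ξ / 2)) ^ 2 / J ξ)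
    (f g : ℝ → ℝ)
    (hf : ContinuousOn f (Set.Icc (-2) 2)) (hg : ContinuousOn g (Set.Icc (-2) 2)) :
    ∫ ξ in Set.Ioo (-2 : ℝ) 2,
        ((1 / 2) * ∫ η in Set.Ioo (-2 : ℝ) 2, R ξ η * g η) * f ξ * J ξ ^ 3
      = ∫ ξ in Set.Ioo (-2 : ℝ) 2,
        g ξ * ((1 / 2) * ∫ η in Set.Ioo (-2 : ℝ) 2, R ξ η * f η) * J ξ ^ 3 := by
  set I : Set ℝ := Set.Ioo (-2 : ℝ) 2 with hIdef
  set K : ℝ → ℝ → ℝ := fun ξ η => ((1 + min ξ η / 2) * (1 - max ξ η / 2)) ^ 2 with hKdef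
  have hKsymm : ∀ ξ η, K ξ η = K η ξ := by
    intro ξ η; simp [hKdef, min_comm, max_comm]
  have hKR : ∀ ξ ∈ I, ∀ η, η ∈ I → R ξ η * J ξ ^ 3 = K ξ η := by
    intro ξ hξ η hη
    have h1 : (0 : ℝ) < 1 + ξ / 2 := by have := hξ.1; linarith
    have h2 : (0 : ℝ) < 1 - ξ / 2 := by have := hξ.2; linarith
    have hJne : J ξ ≠ 0 := by
      rw [hJ]; nlinarith
    have h1' : (1 : ℝ) + ξ / 2 ≠ 0 := ne_of_gt h1
    have h2' : (1 : ℝ) - ξ / 2 ≠ 0 := ne_of_gt h2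
    rcases le_total η ξ with h | h
    · rw [hR1 ξ η h, hJ, show (1:ℝ) - ξ^2/4 = (1-ξ/2)*(1+ξ/2) from by ring]
      simp only [hKdef, min_eq_right h, max_eq_left h]
      rw [div_pow, div_div, div_mul_eq_mul_div,
        div_eq_iff (by positivity : (1 + ξ/2)^2 * ((1-ξ/2)*(1+ξ/2)) ≠ 0)]
      ring
    · rw [hR2 ξ η h, hJ, show (1:ℝ) - ξ^2/4 = (1-ξ/2)*(1+ξ/2) from by ring]
      simp only [hKdef, min_eq_left h, max_eq_right h]
      rw [div_pow, div_div, div_mul_eq_mul_div,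
        div_eq_iff (by positivity : (1 - ξ/2)^2 * ((1-ξ/2)*(1+ξ/2)) ≠ 0)]
      ring
  -- the symmetrized integrand
  set F : ℝ × ℝ → ℝ := fun p => 1 / 2 * K p.1 p.2 * g p.2 * f p.1 with hFdef
  have hKcont : Continuous fun p : ℝ × ℝ => K p.1 p.2 := by
    apply Continuous.pow
    exact ((continuous_const.add ((continuous_fst.min continuous_snd).div_const 2)).mul
      (continuous_const.sub ((continuous_fst.max continuous_snd).div_const 2)))
  have hFcont : ContinuousOn F (Set.Icc (-2 : ℝ) 2 ×ˢ Set.Icc (-2 : ℝ) 2) := by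
    apply ContinuousOn.mul
    · apply ContinuousOn.mul
      · exact (continuous_const.mul hKcont).continuousOn
      · exact hg.comp continuous_snd.continuousOn fun p hp => hp.2
    · exact hf.comp continuous_fst.continuousOn fun p hp => hp.1
  have hFint : IntegrableOn F (I ×ˢ I) := by
    apply IntegrableOn.mono_set
      (hFcont.integrableOn_compact (isCompact_Icc.prod isCompact_Icc))
    exact Set.prod_mono Set.Ioo_subset_Icc_self Set.Ioo_subset_Icc_self
  have hFint' : Integrable F ((volume.restrict I).prod (volume.restrict I)) := by
    rw [Measure.prod_restrict, ← Measure.volume_eq_prod]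
    exact hFint
  have hL : ∀ ξ ∈ I, ((1/2 : ℝ) * ∫ η in I, R ξ η * g η) * f ξ * J ξ ^ 3
      = ∫ η in I, F (ξ, η) := by
    intro ξ hξ
    calc ((1/2 : ℝ) * ∫ η in I, R ξ η * g η) * f ξ * J ξ ^ 3
        = 1/2 * ((∫ η in I, R ξ η * g η) * (f ξ * J ξ ^ 3)) := by ring
      _ = 1/2 * ∫ η in I, R ξ η * g η * (f ξ * J ξ ^ 3) := by rw [integral_mul_const]
      _ = ∫ η in I, 1/2 * (R ξ η * g η * (f ξ * J ξ ^ 3)) := by rw [integral_const_mul]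
      _ = ∫ η in I, F (ξ, η) := by
          apply setIntegral_congr_fun measurableSet_Ioo
          intro η hη
          simp only [hFdef]
          rw [← hKR ξ hξ η hη]
          ring
  have hRt : ∀ ξ ∈ I, g ξ * ((1/2 : ℝ) * ∫ η in I, R ξ η * f η) * J ξ ^ 3
      = ∫ η in I, F (η, ξ) := by
    intro ξ hξ
    calc g ξ * ((1/2 : ℝ) * ∫ η in I, R ξ η * f η) * J ξ ^ 3
        = 1/2 * ((∫ η in I, R ξ η * f η) * (g ξ * J ξ ^ 3)) := by ring
      _ = 1/2 * ∫ η in I, R ξ η * f η * (g ξ * J ξ ^ 3) := by rw [integral_mul_const]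
      _ = ∫ η in I, 1/2 * (R ξ η * f η * (g ξ * J ξ ^ 3)) := by rw [integral_const_mul]
      _ = ∫ η in I, F (η, ξ) := by
          apply setIntegral_congr_fun measurableSet_Ioo
          intro η hη
          simp only [hFdef]
          rw [hKsymm η ξ, ← hKR ξ hξ η hη]
          ring
  calc ∫ ξ in I, ((1/2 : ℝ) * ∫ η in I, R ξ η * g η) * f ξ * J ξ ^ 3
      = ∫ ξ in I, ∫ η in I, F (ξ, η) := setIntegral_congr_fun measurableSet_Ioo hL
    _ = ∫ η in I, ∫ ξ in I, F (ξ, η) := integral_integral_swap hFint'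
    _ = ∫ ξ in I, g ξ * ((1/2 : ℝ) * ∫ η in I, R ξ η * f η) * J ξ ^ 3 := by
        apply setIntegral_congr_fun measurableSet_Ioo
        intro ξ hξ
        exact (hRt ξ hξ).symm
end

section
/- (Explicit pure two-peakon solution) Let p̄₁ > p̄₂ > 0, β > 0, Q₀ ∈ ℝ, and set A = p̄₁ − p̄₂, P = p̄₁ + p̄₂. Define p(t) = A(1 − β e^{At})/(1 + β e^{At}), q(t) = log( A² β e^{At} / ((p̄₁ + p̄₂ β e^{At})(p̄₂ + p̄₁ β e^{At})) ), and Q(t) = Q₀ + Pt − log((p̄₁ + p̄₂ β e^{At})/(p̄₂ + p̄₁ β e^{At})) + log((p̄₁ + β p̄₂)/(p̄₂ + β p̄₁)). Then for all t ∈ ℝ: q(t) < 0, q'(t) = p(t)(1 − e^{q(t)}), p'(t) = −(1/2)(P² − p(t)²) e^{q(t)}, and Q'(t) = P(1 + e^{q(t)}). -/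
/-- Explicit pure two-peakon solution: the stated formulas for `p`, `q`, `Q` satisfy
`q < 0` and solve the reduced two-peakon system
`q' = p(1 - e^q)`, `p' = -(1/2)(P² - p²)e^q`, `Q' = P(1 + e^q)`. -/
theorem stmt_15 (p1 p2 : ℝ) (h12 : p2 < p1) (h2 : 0 < p2)
    (β : ℝ) (hβ : 0 < β) (Q₀ : ℝ) (A P : ℝ)
    (hA : A = p1 - p2) (hP : P = p1 + p2)
    (p q Q : ℝ → ℝ)
    (hp : ∀ t, p t = A * (1 - β * Real.exp (A * t)) / (1 + β * Real.exp (A * t)))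
    (hq : ∀ t, q t = Real.log (A ^ 2 * β * Real.exp (A * t)
        / ((p1 + p2 * β * Real.exp (A * t)) * (p2 + p1 * β * Real.exp (A * t)))))
    (hQ : ∀ t, Q t = Q₀ + P * t
        - Real.log ((p1 + p2 * β * Real.exp (A * t)) / (p2 + p1 * β * Real.exp (A * t)))
        + Real.log ((p1 + β * p2) / (p2 + β * p1))) :
    ∀ t : ℝ, q t < 0
      ∧ HasDerivAt q (p t * (1 - Real.exp (q t))) t
      ∧ HasDerivAt p (-(1 / 2) * (P ^ 2 - p t ^ 2) * Real.exp (q t)) t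
      ∧ HasDerivAt Q (P * (1 + Real.exp (q t))) t := by
  have h1 : 0 < p1 := h2.trans h12
  have hApos : 0 < A := by rw [hA]; linarith
  intro t
  have het : 0 < Real.exp (A * t) := Real.exp_pos _
  set e := Real.exp (A * t) with he
  have hE : 0 < β * e := mul_pos hβ het
  have hD1 : 0 < p1 + p2 * β * e := by positivity
  have hD2 : 0 < p2 + p1 * β * e := by positivity
  have h1E : 0 < 1 + β * e := by positivity
  -- derivative of inner exponential
  have hexp : HasDerivAt (fun s : ℝ => Real.exp (A * s)) (e * A) t := by
    simpa using ((hasDerivAt_id t).const_mul A).exp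
  -- exp (q t)
  have hqt : Real.exp (q t) = A ^ 2 * β * e
      / ((p1 + p2 * β * e) * (p2 + p1 * β * e)) := by
    rw [hq t, ← he, Real.exp_log (by positivity)]
  -- q t < 0
  have hqneg : q t < 0 := by
    rw [hq t, ← he]
    apply Real.log_neg (by positivity)
    rw [div_lt_one (by positivity), hA]
    nlinarith [mul_pos (mul_pos h1 h2) (pow_pos h1E 2)]
  refine ⟨hqneg, ?_, ?_, ?_⟩
  · -- q'
    have hD1' : HasDerivAt (fun s => p1 + p2 * β * Real.exp (A * s)) (p2 * β * (e * A)) t :=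
      (hexp.const_mul (p2 * β)).const_add p1
    have hD2' : HasDerivAt (fun s => p2 + p1 * β * Real.exp (A * s)) (p1 * β * (e * A)) t :=
      (hexp.const_mul (p1 * β)).const_add p2
    have hq2 : HasDerivAt (fun s => Real.log (A ^ 2 * β) + A * s
        - Real.log (p1 + p2 * β * Real.exp (A * s))
        - Real.log (p2 + p1 * β * Real.exp (A * s)))
        (A - p2 * β * (e * A) / (p1 + p2 * β * e) - p1 * β * (e * A) / (p2 + p1 * β * e)) t := by
      have hid : HasDerivAt (fun s : ℝ => Real.log (A ^ 2 * β) + A * s) A t := by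
        simpa using ((hasDerivAt_id t).const_mul A).const_add (Real.log (A ^ 2 * β))
      exact (hid.sub (hD1'.log hD1.ne')).sub (hD2'.log hD2.ne')
    have hfeq : (fun s => Real.log (A ^ 2 * β) + A * s
        - Real.log (p1 + p2 * β * Real.exp (A * s))
        - Real.log (p2 + p1 * β * Real.exp (A * s))) = q := by
      funext s
      have hes : 0 < Real.exp (A * s) := Real.exp_pos _
      have hd1 : (0:ℝ) < p1 + p2 * β * Real.exp (A * s) := by positivity
      have hd2 : (0:ℝ) < p2 + p1 * β * Real.exp (A * s) := by positivity
      rw [hq s, Real.log_div (by positivity) (by positivity),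
        Real.log_mul (by positivity) hes.ne', Real.log_mul hd1.ne' hd2.ne',
        Real.log_exp]
      ring
    rw [hfeq] at hq2
    have hval : A - p2 * β * (e * A) / (p1 + p2 * β * e) - p1 * β * (e * A) / (p2 + p1 * β * e)
        = p t * (1 - Real.exp (q t)) := by
      rw [hp t, ← he, hqt, hA]
      field_simp
      ring
    rwa [hval] at hq2
  · -- p'
    have hnum : HasDerivAt (fun s => A * (1 - β * Real.exp (A * s))) (A * (-(β * (e * A)))) t := by
      exact (((hexp.const_mul β).const_sub 1)).const_mul A
    have hden : HasDerivAt (fun s => 1 + β * Real.exp (A * s)) (β * (e * A)) t :=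
      (hexp.const_mul β).const_add 1
    have hp2 : HasDerivAt (fun s => A * (1 - β * Real.exp (A * s)) / (1 + β * Real.exp (A * s)))
        ((A * (-(β * (e * A))) * (1 + β * e) - A * (1 - β * e) * (β * (e * A))) / (1 + β * e) ^ 2)
        t := hnum.div hden h1E.ne'
    have hfeq : (fun s => A * (1 - β * Real.exp (A * s)) / (1 + β * Real.exp (A * s))) = p := by
      funext s; rw [hp s]
    rw [hfeq] at hp2
    have hval : (A * (-(β * (e * A))) * (1 + β * e) - A * (1 - β * e) * (β * (e * A))) / (1 + β * e) ^ 2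
        = -(1 / 2) * (P ^ 2 - p t ^ 2) * Real.exp (q t) := by
      rw [hp t, ← he, hqt, hA, hP]
      field_simp
      ring
    rwa [hval] at hp2
  · -- Q'
    have hD1' : HasDerivAt (fun s => p1 + p2 * β * Real.exp (A * s)) (p2 * β * (e * A)) t :=
      (hexp.const_mul (p2 * β)).const_add p1
    have hD2' : HasDerivAt (fun s => p2 + p1 * β * Real.exp (A * s)) (p1 * β * (e * A)) t :=
      (hexp.const_mul (p1 * β)).const_add p2
    have hQ2 : HasDerivAt (fun s => Q₀ + P * s
        - (Real.log (p1 + p2 * β * Real.exp (A * s)) - Real.log (p2 + p1 * β * Real.exp (A * s)))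
        + Real.log ((p1 + β * p2) / (p2 + β * p1)))
        (P - (p2 * β * (e * A) / (p1 + p2 * β * e) - p1 * β * (e * A) / (p2 + p1 * β * e))) t := by
      have hid : HasDerivAt (fun s : ℝ => Q₀ + P * s) P t := by
        simpa using ((hasDerivAt_id t).const_mul P).const_add Q₀
      exact ((hid.sub ((hD1'.log hD1.ne').sub (hD2'.log hD2.ne'))).add_const _)
    have hfeq : (fun s => Q₀ + P * s
        - (Real.log (p1 + p2 * β * Real.exp (A * s)) - Real.log (p2 + p1 * β * Real.exp (A * s)))
        + Real.log ((p1 + β * p2) / (p2 + β * p1))) = Q := by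
      funext s
      have hes : 0 < Real.exp (A * s) := Real.exp_pos _
      have hd1 : (0:ℝ) < p1 + p2 * β * Real.exp (A * s) := by positivity
      have hd2 : (0:ℝ) < p2 + p1 * β * Real.exp (A * s) := by positivity
      rw [hQ s, Real.log_div hd1.ne' hd2.ne']
    rw [hfeq] at hQ2
    have hval : P - (p2 * β * (e * A) / (p1 + p2 * β * e) - p1 * β * (e * A) / (p2 + p1 * β * e))
        = P * (1 + Real.exp (q t)) := by
      rw [hqt, hA, hP]
      field_simp
      ring
    rwa [hval] at hQ2
end

section
/- (Conservation of the reduced two-peakon Hamiltonian) Let I ⊆ ℝ be an interval and let P, Q, p, q : I → ℝ be differentiable functions with q(t) ≠ 0 for all t ∈ I, satisfying P' = 0, Q' = P(1 + e^{−|q|}), p' = (1/2)(P² − p²) sign(q) e^{−|q|}, q' = p(1 − e^{−|q|}). Then the function H(t) = (1/4)[ P(t)² + p(t)² + (P(t)² − p(t)²) e^{−|q(t)|} ] is constant on I. -/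
/-- Conservation of the reduced two-peakon Hamiltonian
`H = (1/4)(P² + p² + (P² - p²)e^{-|q|})` along the reduced two-peakon system. -/
theorem stmt_16 (I : Set ℝ) (hI : I.OrdConnected)
    (P Q p q : ℝ → ℝ) (hq0 : ∀ t ∈ I, q t ≠ 0)
    (hP : ∀ t ∈ I, HasDerivAt P 0 t)
    (hQ : ∀ t ∈ I, HasDerivAt Q (P t * (1 + Real.exp (-|q t|))) t)
    (hp : ∀ t ∈ I, HasDerivAt p
      ((1 / 2) * (P t ^ 2 - p t ^ 2) * Real.sign (q t) * Real.exp (-|q t|)) t)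
    (hq : ∀ t ∈ I, HasDerivAt q (p t * (1 - Real.exp (-|q t|))) t) :
    ∀ s ∈ I, ∀ t ∈ I,
      (1 / 4) * (P s ^ 2 + p s ^ 2 + (P s ^ 2 - p s ^ 2) * Real.exp (-|q s|))
        = (1 / 4) * (P t ^ 2 + p t ^ 2 + (P t ^ 2 - p t ^ 2) * Real.exp (-|q t|)) := by
  set H : ℝ → ℝ := fun t =>
    (1 / 4) * (P t ^ 2 + p t ^ 2 + (P t ^ 2 - p t ^ 2) * Real.exp (-|q t|)) with hH
  have key : ∀ t ∈ I, HasDerivAt H 0 t := by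
    intro t ht
    have hPt := hP t ht
    have hpt := hp t ht
    have hqt := hq t ht
    set E := Real.exp (-|q t|) with hE
    set sgn := Real.sign (q t) with hsgn
    -- derivative of |q ·|
    have habs : HasDerivAt (fun u => |q u|) (sgn * (p t * (1 - E))) t := by
      rcases lt_or_gt_of_ne (hq0 t ht) with h | h
      · have := (hasDerivAt_abs (ne_of_lt h)).comp t hqt
        simpa [Function.comp_def, hsgn, Real.sign_of_neg h, sign_neg h] using this
      · have := (hasDerivAt_abs (ne_of_gt h)).comp t hqt
        simpa [Function.comp_def, hsgn, Real.sign_of_pos h, sign_pos h] using this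
    have hExp : HasDerivAt (fun u => Real.exp (-|q u|))
        (Real.exp (-|q t|) * (-(sgn * (p t * (1 - E))))) t := habs.neg.exp
    have hD : HasDerivAt H ((1 / 4) * ((2 * P t ^ 1 * 0 + 2 * p t ^ 1 *
        ((1 / 2) * (P t ^ 2 - p t ^ 2) * sgn * E)) +
        ((2 * P t ^ 1 * 0 - 2 * p t ^ 1 *
          ((1 / 2) * (P t ^ 2 - p t ^ 2) * sgn * E)) * E +
          (P t ^ 2 - p t ^ 2) * (Real.exp (-|q t|) * (-(sgn * (p t * (1 - E)))))))) t :=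
      (((hPt.pow 2).add (hpt.pow 2)).add
        (((hPt.pow 2).sub (hpt.pow 2)).mul hExp)).const_mul (1 / 4)
    convert hD using 1
    rw [← hE]
    ring
  intro s hs t ht
  have h := Convex.norm_image_sub_le_of_norm_hasDerivWithin_le
    (f := H) (f' := fun _ => 0) (s := I) (C := (0:ℝ))
    (fun x hx => (key x hx).hasDerivWithinAt)
    (fun x _ => by simp) hI.convex ht hs
  simp only [norm_zero, zero_mul, norm_le_zero_iff, sub_eq_zero] at h
  exact h
end

section
/- (First trace coefficient I₁(1,0)) Let m : ℝ → ℝ be continuous with compact support. Define φ₀(x) = cosh(x/2), θ₀(x) = 2 e^{−x/2}, φ₁(x) = −2 ∫_{−∞}^{x} sinh((x−ξ)/2) cosh(ξ/2) m(ξ) dξ, and θ₁(x) = 4 ∫_{x}^{+∞} sinh((x−ξ)/2) e^{−ξ/2} m(ξ) dξ. Then for every x ∈ ℝ: θ₀(x) φ₁'(x) + θ₁(x) φ₀'(x) − θ₀'(x) φ₁(x) − θ₁'(x) φ₀(x) = −∫_ℝ m(ξ)(1 + e^{−ξ}) dξ. -/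
open MeasureTheory Set Real

private lemma ftc_Iic (f : ℝ → ℝ) (hc : Continuous f) (hi : Integrable f) (x : ℝ) :
    HasDerivAt (fun y => ∫ ξ in Iic y, f ξ) (f x) x := by
  have h : ∀ y : ℝ, ∫ ξ in Iic y, f ξ = (∫ ξ in Iic 0, f ξ) + ∫ ξ in (0:ℝ)..y, f ξ := by
    intro y
    rw [← intervalIntegral.integral_Iic_sub_Iic hi.integrableOn hi.integrableOn]
    ring
  have hd : HasDerivAt (fun y => (∫ ξ in Iic 0, f ξ) + ∫ ξ in (0:ℝ)..y, f ξ) (f x) x :=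
    (intervalIntegral.integral_hasDerivAt_right hi.intervalIntegrable
      hc.aestronglyMeasurable.stronglyMeasurableAtFilter hc.continuousAt).const_add _
  exact hd.congr_of_eventuallyEq (Filter.Eventually.of_forall h)

/-- First trace coefficient `I₁(1,0)`: for `m` continuous with compact support,
`θ₀ φ₁' + θ₁ φ₀' - θ₀' φ₁ - θ₁' φ₀ = -∫ m(ξ)(1 + e^{-ξ}) dξ` for every `x`. -/
theorem stmt_17 (m : ℝ → ℝ) (hm : Continuous m) (hsupp : HasCompactSupport m)
    (φ₀ θ₀ φ₁ θ₁ : ℝ → ℝ)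
    (hφ₀ : ∀ x, φ₀ x = Real.cosh (x / 2))
    (hθ₀ : ∀ x, θ₀ x = 2 * Real.exp (-x / 2))
    (hφ₁ : ∀ x, φ₁ x
      = -2 * ∫ ξ in Set.Iic x, Real.sinh ((x - ξ) / 2) * Real.cosh (ξ / 2) * m ξ)
    (hθ₁ : ∀ x, θ₁ x
      = 4 * ∫ ξ in Set.Ici x, Real.sinh ((x - ξ) / 2) * Real.exp (-ξ / 2) * m ξ) :
    ∀ x : ℝ,
      θ₀ x * deriv φ₁ x + θ₁ x * deriv φ₀ x - deriv θ₀ x * φ₁ x - deriv θ₁ x * φ₀ x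
        = -∫ ξ : ℝ, m ξ * (1 + Real.exp (-ξ)) := by
  intro x
  set a : ℝ → ℝ := fun ξ => Real.cosh (ξ / 2) * Real.cosh (ξ / 2) * m ξ with ha_def
  set b : ℝ → ℝ := fun ξ => Real.sinh (ξ / 2) * Real.cosh (ξ / 2) * m ξ with hb_def
  set c : ℝ → ℝ := fun ξ => Real.cosh (ξ / 2) * Real.exp (-ξ / 2) * m ξ with hc_def
  set d : ℝ → ℝ := fun ξ => Real.sinh (ξ / 2) * Real.exp (-ξ / 2) * m ξ with hd_def
  have hint : ∀ g : ℝ → ℝ, Continuous g → Integrable (fun ξ => g ξ * m ξ) := fun g hg =>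
    (hg.mul hm).integrable_of_hasCompactSupport hsupp.mul_left
  have hca : Continuous a := by fun_prop
  have hcb : Continuous b := by fun_prop
  have hcc : Continuous c := by fun_prop
  have hcd : Continuous d := by fun_prop
  have hia : Integrable a := hint _ (by fun_prop)
  have hib : Integrable b := hint _ (by fun_prop)
  have hic : Integrable c := hint _ (by fun_prop)
  have hid : Integrable d := hint _ (by fun_prop)
  -- rewriting φ₁ and θ₁
  have hφ₁' : ∀ y, φ₁ y = -2 * (Real.sinh (y / 2) * (∫ ξ in Iic y, a ξ)
      - Real.cosh (y / 2) * ∫ ξ in Iic y, b ξ) := by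
    intro y
    have key : (∫ ξ in Iic y, Real.sinh ((y - ξ) / 2) * Real.cosh (ξ / 2) * m ξ)
        = Real.sinh (y / 2) * (∫ ξ in Iic y, a ξ) - Real.cosh (y / 2) * ∫ ξ in Iic y, b ξ := by
      rw [← integral_const_mul, ← integral_const_mul,
        ← integral_sub (hia.integrableOn.const_mul _) (hib.integrableOn.const_mul _)]
      refine integral_congr_ae (Filter.Eventually.of_forall fun ξ => ?_)
      simp only [ha_def, hb_def]
      rw [show (y - ξ) / 2 = y / 2 - ξ / 2 by ring, Real.sinh_sub]
      ring
    rw [hφ₁, key]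
  have hθ₁' : ∀ y, θ₁ y = 4 * (Real.sinh (y / 2) * ((∫ ξ, c ξ) - ∫ ξ in Iic y, c ξ)
      - Real.cosh (y / 2) * ((∫ ξ, d ξ) - ∫ ξ in Iic y, d ξ)) := by
    intro y
    have hCi : ∀ (g : ℝ → ℝ), Integrable g →
        (∫ ξ in Ici y, g ξ) = (∫ ξ, g ξ) - ∫ ξ in Iic y, g ξ := by
      intro g hg
      rw [integral_Iic_eq_integral_Iio, eq_sub_iff_add_eq, add_comm,
        intervalIntegral.integral_Iio_add_Ici hg.integrableOn hg.integrableOn]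
    have key : (∫ ξ in Ici y, Real.sinh ((y - ξ) / 2) * Real.exp (-ξ / 2) * m ξ)
        = Real.sinh (y / 2) * (∫ ξ in Ici y, c ξ) - Real.cosh (y / 2) * ∫ ξ in Ici y, d ξ := by
      rw [← integral_const_mul, ← integral_const_mul,
        ← integral_sub (hic.integrableOn.const_mul _) (hid.integrableOn.const_mul _)]
      refine integral_congr_ae (Filter.Eventually.of_forall fun ξ => ?_)
      simp only [hc_def, hd_def]
      rw [show (y - ξ) / 2 = y / 2 - ξ / 2 by ring, Real.sinh_sub]
      ring
    rw [hθ₁, key, hCi c hic, hCi d hid]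
  -- elementary derivatives
  have hhalf : HasDerivAt (fun y : ℝ => y / 2) (1 / 2) x := by
    simpa using (hasDerivAt_id x).div_const 2
  have hS : HasDerivAt (fun y : ℝ => Real.sinh (y / 2)) (Real.cosh (x / 2) * (1 / 2)) x :=
    hhalf.sinh
  have hC : HasDerivAt (fun y : ℝ => Real.cosh (y / 2)) (Real.sinh (x / 2) * (1 / 2)) x :=
    hhalf.cosh
  have hA := ftc_Iic a hca hia x
  have hB := ftc_Iic b hcb hib x
  have hCc : HasDerivAt (fun y => (∫ ξ, c ξ) - ∫ ξ in Iic y, c ξ) (-(c x)) x :=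
    (ftc_Iic c hcc hic x).const_sub _
  have hDd : HasDerivAt (fun y => (∫ ξ, d ξ) - ∫ ξ in Iic y, d ξ) (-(d x)) x :=
    (ftc_Iic d hcd hid x).const_sub _
  -- derivatives of the four functions
  have dφ₀ : HasDerivAt φ₀ (Real.sinh (x / 2) * (1 / 2)) x :=
    hC.congr_of_eventuallyEq (Filter.Eventually.of_forall hφ₀)
  have dθ₀ : HasDerivAt θ₀ (2 * (Real.exp (-x / 2) * (-1 / 2))) x := by
    have h1 : HasDerivAt (fun y : ℝ => -y / 2) (-1 / 2) x := by
      simpa using ((hasDerivAt_id x).neg.div_const 2)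
    exact (h1.exp.const_mul 2).congr_of_eventuallyEq (Filter.Eventually.of_forall hθ₀)
  have dφ₁ : HasDerivAt φ₁ (-2 * ((Real.cosh (x / 2) * (1 / 2)) * (∫ ξ in Iic x, a ξ)
      + Real.sinh (x / 2) * a x
      - ((Real.sinh (x / 2) * (1 / 2)) * (∫ ξ in Iic x, b ξ) + Real.cosh (x / 2) * b x))) x :=
    (((hS.mul hA).sub (hC.mul hB)).const_mul (-2)).congr_of_eventuallyEq
      (Filter.Eventually.of_forall hφ₁')
  have dθ₁ : HasDerivAt θ₁ (4 * ((Real.cosh (x / 2) * (1 / 2)) * ((∫ ξ, c ξ) - ∫ ξ in Iic x, c ξ)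
      + Real.sinh (x / 2) * (-(c x))
      - ((Real.sinh (x / 2) * (1 / 2)) * ((∫ ξ, d ξ) - ∫ ξ in Iic x, d ξ)
        + Real.cosh (x / 2) * (-(d x))))) x :=
    (((hS.mul hCc).sub (hC.mul hDd)).const_mul 4).congr_of_eventuallyEq
      (Filter.Eventually.of_forall hθ₁')
  -- rewrite goal
  rw [dφ₀.deriv, dθ₀.deriv, dφ₁.deriv, dθ₁.deriv, hφ₁' x, hθ₁' x, hφ₀ x, hθ₀ x]
  -- the right-hand side
  have hRHS : (∫ ξ : ℝ, m ξ * (1 + Real.exp (-ξ))) = 2 * ∫ ξ, c ξ := by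
    rw [← integral_const_mul]
    refine integral_congr_ae (Filter.Eventually.of_forall fun ξ => ?_)
    have e1 : Real.exp (-ξ / 2) * Real.exp (ξ / 2) = 1 := by
      rw [← Real.exp_add]; ring_nf; exact Real.exp_zero
    have e2 : Real.exp (-ξ / 2) * Real.exp (-ξ / 2) = Real.exp (-ξ) := by
      rw [← Real.exp_add]; ring_nf
    have hch : Real.cosh (ξ / 2) = (Real.exp (ξ / 2) + Real.exp (-ξ / 2)) / 2 := by
      rw [Real.cosh_eq]; congr 2; ring
    rw [hc_def]
    simp only
    rw [hch]
    linear_combination (-(m ξ)) * e1 + (-(m ξ)) * e2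
  rw [hRHS]
  -- relation between the Iic-integrals
  have hAB : (∫ ξ in Iic x, a ξ) = (∫ ξ in Iic x, b ξ) + ∫ ξ in Iic x, c ξ := by
    rw [← integral_add hib.integrableOn hic.integrableOn]
    refine integral_congr_ae (Filter.Eventually.of_forall fun ξ => ?_)
    have h1 : Real.cosh (ξ / 2) - Real.sinh (ξ / 2) = Real.exp (-ξ / 2) := by
      rw [Real.cosh_sub_sinh]; congr 1; ring
    rw [ha_def, hb_def, hc_def]
    simp only
    linear_combination (Real.cosh (ξ / 2) * m ξ) * h1
  -- final algebra
  have hp : Real.exp (-x / 2) * (Real.cosh (x / 2) + Real.sinh (x / 2)) = 1 := by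
    rw [Real.cosh_add_sinh, ← Real.exp_add]
    ring_nf
    exact Real.exp_zero
  have hq : Real.cosh (x / 2) ^ 2 - Real.sinh (x / 2) ^ 2 = 1 :=
    Real.cosh_sq_sub_sinh_sq (x / 2)
  rw [ha_def, hb_def, hc_def, hd_def] at *
  simp only at *
  linear_combination (-2 * (∫ ξ in Iic x, Real.cosh (ξ / 2) * Real.cosh (ξ / 2) * m ξ)
      + 2 * ∫ ξ in Iic x, Real.sinh (ξ / 2) * Real.cosh (ξ / 2) * m ξ) * hp
    + (-2 * (∫ ξ, Real.cosh (ξ / 2) * Real.exp (-ξ / 2) * m ξ)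
      + 2 * ∫ ξ in Iic x, Real.cosh (ξ / 2) * Real.exp (-ξ / 2) * m ξ) * hq
    + (-2) * hAB
end

section
/- (First trace coefficient I₁(0,1)) Let m : ℝ → ℝ be continuous with compact support. Define ψ₀(x) = 2 e^{x/2}, θ₀(x) = 2 e^{−x/2}, ψ₁(x) = −4 ∫_{−∞}^{x} sinh((x−ξ)/2) e^{ξ/2} m(ξ) dξ, and θ₁(x) = 4 ∫_{x}^{+∞} sinh((x−ξ)/2) e^{−ξ/2} m(ξ) dξ. Then for every x ∈ ℝ: θ₀(x) ψ₁'(x) + θ₁(x) ψ₀'(x) − θ₀'(x) ψ₁(x) − θ₁'(x) ψ₀(x) = −4 ∫_ℝ m(ξ) dξ. -/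
open MeasureTheory Set

private lemma hasDerivAt_int_Iic (f : ℝ → ℝ) (hf : Continuous f)
    (hi : Integrable f) (x : ℝ) :
    HasDerivAt (fun y => ∫ ξ in Set.Iic y, f ξ) (f x) x := by
  have key : ∀ y : ℝ, ∫ ξ in Set.Iic y, f ξ
      = (∫ ξ in Set.Iic (0:ℝ), f ξ) + ∫ ξ in (0:ℝ)..y, f ξ := by
    intro y
    have := intervalIntegral.integral_Iic_sub_Iic (μ := volume) (f := f)
      (hi.integrableOn) (hi.integrableOn) (a := 0) (b := y)
    linarith
  have h1 : HasDerivAt (fun y => (∫ ξ in Set.Iic (0:ℝ), f ξ) + ∫ ξ in (0:ℝ)..y, f ξ)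
      (f x) x := by
    refine HasDerivAt.const_add _ ?_
    exact intervalIntegral.integral_hasDerivAt_right hi.intervalIntegrable
      (hf.stronglyMeasurableAtFilter _ _) hf.continuousAt
  exact h1.congr_of_eventuallyEq (Filter.Eventually.of_forall fun y => key y)

private lemma hasDerivAt_int_Ici (f : ℝ → ℝ) (hf : Continuous f)
    (hi : Integrable f) (x : ℝ) :
    HasDerivAt (fun y => ∫ ξ in Set.Ici y, f ξ) (-(f x)) x := by
  have key : ∀ y : ℝ, ∫ ξ in Set.Ici y, f ξ
      = (∫ ξ : ℝ, f ξ) - ∫ ξ in Set.Iic y, f ξ := by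
    intro y
    have h := intervalIntegral.integral_Iio_add_Ici (μ := volume) (f := f) hi.integrableOn hi.integrableOn
      (b := y)
    rw [integral_Iic_eq_integral_Iio]
    linarith
  have h1 : HasDerivAt (fun y => (∫ ξ : ℝ, f ξ) - ∫ ξ in Set.Iic y, f ξ) (-(f x)) x :=
    (hasDerivAt_int_Iic f hf hi x).const_sub _
  exact h1.congr_of_eventuallyEq (Filter.Eventually.of_forall fun y => key y)

/-- First trace coefficient `I₁(0,1)`: for `m` continuous with compact support,
`θ₀ ψ₁' + θ₁ ψ₀' - θ₀' ψ₁ - θ₁' ψ₀ = -4 ∫ m(ξ) dξ` for every `x`. -/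
theorem stmt_18 (m : ℝ → ℝ) (hm : Continuous m) (hsupp : HasCompactSupport m)
    (ψ₀ θ₀ ψ₁ θ₁ : ℝ → ℝ)
    (hψ₀ : ∀ x, ψ₀ x = 2 * Real.exp (x / 2))
    (hθ₀ : ∀ x, θ₀ x = 2 * Real.exp (-x / 2))
    (hψ₁ : ∀ x, ψ₁ x
      = -4 * ∫ ξ in Set.Iic x, Real.sinh ((x - ξ) / 2) * Real.exp (ξ / 2) * m ξ)
    (hθ₁ : ∀ x, θ₁ x
      = 4 * ∫ ξ in Set.Ici x, Real.sinh ((x - ξ) / 2) * Real.exp (-ξ / 2) * m ξ) :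
    ∀ x : ℝ,
      θ₀ x * deriv ψ₁ x + θ₁ x * deriv ψ₀ x - deriv θ₀ x * ψ₁ x - deriv θ₁ x * ψ₀ x
        = -4 * ∫ ξ : ℝ, m ξ := by
  -- basic integrands
  set f₂ : ℝ → ℝ := fun ξ => Real.exp ξ * m ξ with hf₂
  set f₃ : ℝ → ℝ := fun ξ => Real.exp (-ξ) * m ξ with hf₃
  have hmInt : Integrable m := hm.integrable_of_hasCompactSupport hsupp
  have hf₂c : Continuous f₂ := Real.continuous_exp.mul hm
  have hf₃c : Continuous f₃ := (Real.continuous_exp.comp continuous_neg).mul hm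
  have hf₂s : HasCompactSupport f₂ := hsupp.mul_left
  have hf₃s : HasCompactSupport f₃ := hsupp.mul_left
  have hf₂i : Integrable f₂ := hf₂c.integrable_of_hasCompactSupport hf₂s
  have hf₃i : Integrable f₃ := hf₃c.integrable_of_hasCompactSupport hf₃s
  set A : ℝ → ℝ := fun y => ∫ ξ in Set.Iic y, m ξ with hA
  set B : ℝ → ℝ := fun y => ∫ ξ in Set.Iic y, f₂ ξ with hB
  set C : ℝ → ℝ := fun y => ∫ ξ in Set.Ici y, f₃ ξ with hC
  set D : ℝ → ℝ := fun y => ∫ ξ in Set.Ici y, m ξ with hD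
  -- representation of ψ₁
  have hψ₁' : ∀ y : ℝ, ψ₁ y
      = -2 * Real.exp (y/2) * A y + 2 * Real.exp (-y/2) * B y := by
    intro y
    rw [hψ₁ y]
    have hint : ∀ ξ : ℝ, Real.sinh ((y - ξ) / 2) * Real.exp (ξ / 2) * m ξ
        = (Real.exp (y/2) / 2) * m ξ - (Real.exp (-y/2) / 2) * f₂ ξ := by
      intro ξ
      have e1 : Real.exp ((y-ξ)/2) * Real.exp (ξ/2) = Real.exp (y/2) := by
        rw [← Real.exp_add]; ring_nf
      have e2 : Real.exp (-((y-ξ)/2)) * Real.exp (ξ/2)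
          = Real.exp (-y/2) * Real.exp ξ := by
        rw [← Real.exp_add, ← Real.exp_add]; ring_nf
      rw [Real.sinh_eq, hf₂]
      dsimp only
      linear_combination (m ξ / 2) * e1 - (m ξ / 2) * e2
    rw [MeasureTheory.setIntegral_congr_fun measurableSet_Iic
      (fun ξ _ => hint ξ)]
    rw [MeasureTheory.integral_sub
      ((hmInt.integrableOn).const_mul _) ((hf₂i.integrableOn).const_mul _),
      MeasureTheory.integral_const_mul, MeasureTheory.integral_const_mul]
    simp only [hA, hB]
    ring
  -- representation of θ₁
  have hθ₁' : ∀ y : ℝ, θ₁ y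
      = 2 * Real.exp (y/2) * C y - 2 * Real.exp (-y/2) * D y := by
    intro y
    rw [hθ₁ y]
    have hint : ∀ ξ : ℝ, Real.sinh ((y - ξ) / 2) * Real.exp (-ξ / 2) * m ξ
        = (Real.exp (y/2) / 2) * f₃ ξ - (Real.exp (-y/2) / 2) * m ξ := by
      intro ξ
      have e1 : Real.exp ((y-ξ)/2) * Real.exp (-ξ/2)
          = Real.exp (y/2) * Real.exp (-ξ) := by
        rw [← Real.exp_add, ← Real.exp_add]; ring_nf
      have e2 : Real.exp (-((y-ξ)/2)) * Real.exp (-ξ/2) = Real.exp (-y/2) := by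
        rw [← Real.exp_add]; ring_nf
      rw [Real.sinh_eq, hf₃]
      dsimp only
      linear_combination (m ξ / 2) * e1 - (m ξ / 2) * e2
    rw [MeasureTheory.setIntegral_congr_fun measurableSet_Ici
      (fun ξ _ => hint ξ)]
    rw [MeasureTheory.integral_sub
      ((hf₃i.integrableOn).const_mul _) ((hmInt.integrableOn).const_mul _),
      MeasureTheory.integral_const_mul, MeasureTheory.integral_const_mul]
    simp only [hC, hD]
    ring
  intro x
  -- derivatives of the building blocks
  have hAx : HasDerivAt A (m x) x := hasDerivAt_int_Iic m hm hmInt x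
  have hBx : HasDerivAt B (f₂ x) x := hasDerivAt_int_Iic f₂ hf₂c hf₂i x
  have hCx : HasDerivAt C (-(f₃ x)) x := hasDerivAt_int_Ici f₃ hf₃c hf₃i x
  have hDx : HasDerivAt D (-(m x)) x := hasDerivAt_int_Ici m hm hmInt x
  have hexp : HasDerivAt (fun y : ℝ => Real.exp (y/2)) (Real.exp (x/2) / 2) x := by
    refine ((Real.hasDerivAt_exp (x/2)).comp x
      ((hasDerivAt_id x).div_const 2)).congr_deriv ?_
    ring
  have hexpn : HasDerivAt (fun y : ℝ => Real.exp (-y/2)) (-(Real.exp (-x/2)) / 2) x := by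
    have := (Real.hasDerivAt_exp (-x/2)).comp x
      (((hasDerivAt_id x).neg).div_const 2)
    exact this.congr_deriv (by ring)
  -- derivative of ψ₀
  have hψ₀d : deriv ψ₀ x = Real.exp (x/2) := by
    have h : HasDerivAt ψ₀ (Real.exp (x/2)) x := by
      have := (hexp.const_mul 2)
      refine (this.congr_of_eventuallyEq
        (Filter.Eventually.of_forall fun y => (hψ₀ y))).congr_deriv ?_
      ring
    exact h.deriv
  have hθ₀d : deriv θ₀ x = -Real.exp (-x/2) := by
    have h : HasDerivAt θ₀ (-Real.exp (-x/2)) x := by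
      have := (hexpn.const_mul 2)
      refine (this.congr_of_eventuallyEq
        (Filter.Eventually.of_forall fun y => (hθ₀ y))).congr_deriv ?_
      ring
    exact h.deriv
  -- derivative of ψ₁
  have hψ₁d : deriv ψ₁ x = -(Real.exp (x/2)) * A x - Real.exp (-x/2) * B x := by
    have h : HasDerivAt (fun y => -2 * Real.exp (y/2) * A y + 2 * Real.exp (-y/2) * B y)
        ((-2 * (Real.exp (x/2)/2) * A x + -2 * Real.exp (x/2) * m x)
          + (2 * (-(Real.exp (-x/2))/2) * B x + 2 * Real.exp (-x/2) * f₂ x)) x := by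
      have h1 : HasDerivAt (fun y => -2 * Real.exp (y/2) * A y)
          (-2 * (Real.exp (x/2)/2) * A x + -2 * Real.exp (x/2) * m x) x := by
        simpa [mul_assoc, Pi.mul_def] using ((hexp.const_mul (-2)).mul hAx)
      have h2 : HasDerivAt (fun y => 2 * Real.exp (-y/2) * B y)
          (2 * (-(Real.exp (-x/2))/2) * B x + 2 * Real.exp (-x/2) * f₂ x) x := by
        simpa [mul_assoc, Pi.mul_def] using ((hexpn.const_mul 2).mul hBx)
      exact h1.add h2
    have h' := h.congr_of_eventuallyEq
      (Filter.Eventually.of_forall fun y => (hψ₁' y))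
    rw [h'.deriv, hf₂]
    dsimp only
    have e3 : Real.exp (-x/2) * Real.exp x = Real.exp (x/2) := by
      rw [← Real.exp_add]; ring_nf
    linear_combination (2 * m x) * e3
  -- derivative of θ₁
  have hθ₁d : deriv θ₁ x = Real.exp (x/2) * C x + Real.exp (-x/2) * D x := by
    have h : HasDerivAt (fun y => 2 * Real.exp (y/2) * C y - 2 * Real.exp (-y/2) * D y)
        ((2 * (Real.exp (x/2)/2) * C x + 2 * Real.exp (x/2) * (-(f₃ x)))
          - (2 * (-(Real.exp (-x/2))/2) * D x + 2 * Real.exp (-x/2) * (-(m x)))) x := by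
      have h1 : HasDerivAt (fun y => 2 * Real.exp (y/2) * C y)
          (2 * (Real.exp (x/2)/2) * C x + 2 * Real.exp (x/2) * (-(f₃ x))) x := by
        simpa [mul_assoc, Pi.mul_def] using ((hexp.const_mul 2).mul hCx)
      have h2 : HasDerivAt (fun y => 2 * Real.exp (-y/2) * D y)
          (2 * (-(Real.exp (-x/2))/2) * D x + 2 * Real.exp (-x/2) * (-(m x))) x := by
        simpa [mul_assoc, Pi.mul_def] using ((hexpn.const_mul 2).mul hDx)
      exact h1.sub h2
    have h' := h.congr_of_eventuallyEq
      (Filter.Eventually.of_forall fun y => (hθ₁' y))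
    rw [h'.deriv, hf₃]
    dsimp only
    have e3 : Real.exp (x/2) * Real.exp (-x) = Real.exp (-x/2) := by
      rw [← Real.exp_add]; ring_nf
    linear_combination (-2 * m x) * e3
  -- total integral split
  have hsplit : A x + D x = ∫ ξ : ℝ, m ξ := by
    have := intervalIntegral.integral_Iio_add_Ici (μ := volume) (f := m)
      hmInt.integrableOn hmInt.integrableOn (b := x)
    simp only [hA, hD]
    rw [integral_Iic_eq_integral_Iio]
    exact this
  rw [hψ₀ x, hθ₀ x, hψ₁' x, hθ₁' x, hψ₀d, hθ₀d, hψ₁d, hθ₁d, ← hsplit]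
  have ep : Real.exp (-x/2) * Real.exp (x/2) = 1 := by
    rw [← Real.exp_add]; ring_nf; exact Real.exp_zero
  have ep2 : Real.exp (x/2) * Real.exp (x/2) = Real.exp x := by
    rw [← Real.exp_add]; ring_nf
  have ep3 : Real.exp (-x/2) * Real.exp (-x/2) = Real.exp (-x) := by
    rw [← Real.exp_add]; ring_nf
  linear_combination (-4 * (A x + D x)) * ep
end

section
/- (Explicit peakon–antipeakon solution) Let p̄₁ > 0 > p̄₂, ζ > 0, Q₀ ∈ ℝ, and set A = p̄₁ − p̄₂ > 0, P = p̄₁ + p̄₂, and t* = (1/A) log(1/ζ). Define, for t ≠ t*: p(t) = A(1 + ζ e^{At})/(1 − ζ e^{At}), q(t) = log( A² ζ e^{At} / ((p̄₁ ζ e^{At} − p̄₂)(p̄₁ − p̄₂ ζ e^{At})) ), Q(t) = Q₀ + Pt − log((p̄₁ − p̄₂ ζ e^{At})/(p̄₁ − p̄₂ ζ)) + log((p̄₂ − p̄₁ ζ e^{At})/(p̄₂ − p̄₁ ζ)). Then for all t ≠ t*: q(t) < 0, q'(t) = p(t)(1 − e^{q(t)}), p'(t) = −(1/2)(P² − p(t)²)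 e^{q(t)}, and Q'(t) = P(1 + e^{q(t)}). -/
set_option maxHeartbeats 1000000 in
/-- Explicit peakon–antipeakon solution: away from the collision time
`t* = (1/A) log(1/ζ)`, the stated formulas for `p`, `q`, `Q` satisfy `q < 0` and solve
the reduced two-peakon system `q' = p(1 - e^q)`, `p' = -(1/2)(P² - p²)e^q`,
`Q' = P(1 + e^q)`. -/
theorem stmt_19 (p1 p2 : ℝ) (h1 : 0 < p1) (h2 : p2 < 0)
    (ζ : ℝ) (hζ : 0 < ζ) (Q₀ : ℝ) (A P tstar : ℝ)
    (hA : A = p1 - p2) (hP : P = p1 + p2)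
    (htstar : tstar = (1 / A) * Real.log (1 / ζ))
    (p q Q : ℝ → ℝ)
    (hp : ∀ t, t ≠ tstar →
      p t = A * (1 + ζ * Real.exp (A * t)) / (1 - ζ * Real.exp (A * t)))
    (hq : ∀ t, t ≠ tstar →
      q t = Real.log (A ^ 2 * ζ * Real.exp (A * t)
        / ((p1 * ζ * Real.exp (A * t) - p2) * (p1 - p2 * ζ * Real.exp (A * t)))))
    (hQ : ∀ t, t ≠ tstar →
      Q t = Q₀ + P * t
        - Real.log ((p1 - p2 * ζ * Real.exp (A * t)) / (p1 - p2 * ζ))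
        + Real.log ((p2 - p1 * ζ * Real.exp (A * t)) / (p2 - p1 * ζ))) :
    ∀ t : ℝ, t ≠ tstar → q t < 0
      ∧ HasDerivAt q (p t * (1 - Real.exp (q t))) t
      ∧ HasDerivAt p (-(1 / 2) * (P ^ 2 - p t ^ 2) * Real.exp (q t)) t
      ∧ HasDerivAt Q (P * (1 + Real.exp (q t))) t := by
  subst hA hP htstar
  set A : ℝ := p1 - p2 with hA
  set P : ℝ := p1 + p2 with hP
  have hA0 : 0 < A := by rw [hA]; linarith
  intro t ht
  set E : ℝ := Real.exp (A * t) with hE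
  have hE0 : 0 < E := Real.exp_pos _
  have hune : ζ * E ≠ 1 := by
    intro h
    apply ht
    have hE1 : E = 1 / ζ := by
      field_simp at h ⊢
      linarith
    have : A * t = Real.log (1 / ζ) := by
      rw [← hE1, hE, Real.log_exp]
    rw [← this]
    field_simp
  have h1u : 1 - ζ * E ≠ 0 := by
    intro h
    exact hune (by linarith)
  have hpe : 0 < p1 * ζ * E := by positivity
  have hpe2 : 0 < p2 * ζ * E * (-1) := by nlinarith [mul_pos (mul_pos (neg_pos.2 h2) hζ) hE0]
  have hd1 : 0 < p1 * ζ * E - p2 := by nlinarith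
  have hd2 : 0 < p1 - p2 * ζ * E := by nlinarith
  have hn1 : 0 < p1 - p2 * ζ := by nlinarith [mul_pos (neg_pos.2 h2) hζ]
  have hn2 : p2 - p1 * ζ < 0 := by nlinarith [mul_pos h1 hζ]
  have hn2' : p2 - p1 * ζ * E < 0 := by nlinarith
  have hsq : 0 < (1 - ζ * E) ^ 2 :=
    lt_of_le_of_ne (sq_nonneg _) (Ne.symm (pow_ne_zero 2 h1u))
  have hX : 0 < A ^ 2 * ζ * E / ((p1 * ζ * E - p2) * (p1 - p2 * ζ * E)) := by
    positivity
  -- q t < 0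
  have hqneg : q t < 0 := by
    rw [hq t ht]
    apply Real.log_neg hX
    rw [div_lt_one (by positivity), hA]
    nlinarith [mul_pos (mul_pos h1 (neg_pos.2 h2)) hsq]
  -- neighborhood avoiding tstar
  have hev : ∀ᶠ s in nhds t, s ≠ (1 / A) * Real.log (1 / ζ) :=
    isOpen_compl_singleton.mem_nhds (by simpa using ht)
  -- basic derivative blocks
  have hAs : HasDerivAt (fun s : ℝ => A * s) A t := by
    simpa using (hasDerivAt_id t).const_mul A
  have hexp : HasDerivAt (fun s : ℝ => Real.exp (A * s)) (E * A) t := by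
    simpa using hAs.exp
  -- exp(q t)
  have heq : Real.exp (q t)
      = A ^ 2 * ζ * E / ((p1 * ζ * E - p2) * (p1 - p2 * ζ * E)) := by
    rw [hq t ht, Real.exp_log hX]
  -- derivative of p
  have hnum : HasDerivAt (fun s : ℝ => A * (1 + ζ * Real.exp (A * s)))
      (A * (ζ * (E * A))) t := ((hexp.const_mul ζ).const_add 1).const_mul A
  have hden : HasDerivAt (fun s : ℝ => 1 - ζ * Real.exp (A * s))
      (-(ζ * (E * A))) t := (hexp.const_mul ζ).const_sub 1
  have hdiv := hnum.div hden h1u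
  have hp' : HasDerivAt p
      ((A * (ζ * (E * A)) * (1 - ζ * E) - A * (1 + ζ * E) * -(ζ * (E * A)))
        / (1 - ζ * E) ^ 2) t := by
    refine HasDerivAt.congr_of_eventuallyEq hdiv ?_
    filter_upwards [hev] with s hs
    exact hp s hs
  have hpder : HasDerivAt p (-(1 / 2) * (P ^ 2 - p t ^ 2) * Real.exp (q t)) t := by
    convert hp' using 1
    rw [hp t ht, ← hE, heq, hP, hA]
    field_simp [h1u, hd1.ne', hd2.ne']
    ring
  -- derivative of q
  have hlog1 : HasDerivAt (fun s : ℝ => Real.log (p1 * ζ * Real.exp (A * s) - p2))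
      ((p1 * ζ * (E * A)) / (p1 * ζ * E - p2)) t :=
    ((hexp.const_mul (p1 * ζ)).sub_const p2).log hd1.ne'
  have hlog2 : HasDerivAt (fun s : ℝ => Real.log (p1 - p2 * ζ * Real.exp (A * s)))
      ((-(p2 * ζ * (E * A))) / (p1 - p2 * ζ * E)) t :=
    ((hexp.const_mul (p2 * ζ)).const_sub p1).log hd2.ne'
  have hqtilde : HasDerivAt
      (fun s : ℝ => Real.log (A ^ 2 * ζ) + A * s
        - Real.log (p1 * ζ * Real.exp (A * s) - p2)
        - Real.log (p1 - p2 * ζ * Real.exp (A * s)))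
      (A - (p1 * ζ * (E * A)) / (p1 * ζ * E - p2)
        - (-(p2 * ζ * (E * A))) / (p1 - p2 * ζ * E)) t :=
    ((hAs.const_add (Real.log (A ^ 2 * ζ))).sub hlog1).sub hlog2
  have hq' : HasDerivAt q
      (A - (p1 * ζ * (E * A)) / (p1 * ζ * E - p2)
        - (-(p2 * ζ * (E * A))) / (p1 - p2 * ζ * E)) t := by
    refine HasDerivAt.congr_of_eventuallyEq hqtilde ?_
    filter_upwards [hev] with s hs
    have hEs : (0:ℝ) < Real.exp (A * s) := Real.exp_pos _
    have hd1s : 0 < p1 * ζ * Real.exp (A * s) - p2 := by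
      nlinarith [mul_pos (mul_pos h1 hζ) hEs]
    have hd2s : 0 < p1 - p2 * ζ * Real.exp (A * s) := by
      nlinarith [mul_pos (mul_pos (neg_pos.2 h2) hζ) hEs]
    rw [hq s hs, Real.log_div (by positivity) (by positivity),
      Real.log_mul (by positivity) hEs.ne', Real.log_mul hd1s.ne' hd2s.ne',
      Real.log_exp]
    ring
  have hqder : HasDerivAt q (p t * (1 - Real.exp (q t))) t := by
    convert hq' using 1
    rw [hp t ht, ← hE, heq, hA]
    field_simp [h1u, hd1.ne', hd2.ne']
    ring
  -- derivative of Q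
  have hinner1 : HasDerivAt
      (fun s : ℝ => (p1 - p2 * ζ * Real.exp (A * s)) / (p1 - p2 * ζ))
      ((-(p2 * ζ * (E * A))) / (p1 - p2 * ζ)) t :=
    ((hexp.const_mul (p2 * ζ)).const_sub p1).div_const (p1 - p2 * ζ)
  have hinner2 : HasDerivAt
      (fun s : ℝ => (p2 - p1 * ζ * Real.exp (A * s)) / (p2 - p1 * ζ))
      ((-(p1 * ζ * (E * A))) / (p2 - p1 * ζ)) t :=
    ((hexp.const_mul (p1 * ζ)).const_sub p2).div_const (p2 - p1 * ζ)
  have hv1 : (p1 - p2 * ζ * E) / (p1 - p2 * ζ) ≠ 0 := by positivity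
  have hv2 : (p2 - p1 * ζ * E) / (p2 - p1 * ζ) ≠ 0 :=
    ne_of_gt (div_pos_of_neg_of_neg hn2' hn2)
  have hlogA : HasDerivAt
      (fun s : ℝ => Real.log ((p1 - p2 * ζ * Real.exp (A * s)) / (p1 - p2 * ζ)))
      (((-(p2 * ζ * (E * A))) / (p1 - p2 * ζ)) / ((p1 - p2 * ζ * E) / (p1 - p2 * ζ))) t :=
    hinner1.log hv1
  have hlogB : HasDerivAt
      (fun s : ℝ => Real.log ((p2 - p1 * ζ * Real.exp (A * s)) / (p2 - p1 * ζ)))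
      (((-(p1 * ζ * (E * A))) / (p2 - p1 * ζ)) / ((p2 - p1 * ζ * E) / (p2 - p1 * ζ))) t :=
    hinner2.log hv2
  have hPs : HasDerivAt (fun s : ℝ => Q₀ + P * s) P t := by
    simpa using ((hasDerivAt_id t).const_mul P).const_add Q₀
  have hQtilde := (hPs.sub hlogA).add hlogB
  have hQ' : HasDerivAt Q
      (P - ((-(p2 * ζ * (E * A))) / (p1 - p2 * ζ)) / ((p1 - p2 * ζ * E) / (p1 - p2 * ζ))
        + ((-(p1 * ζ * (E * A))) / (p2 - p1 * ζ)) / ((p2 - p1 * ζ * E) / (p2 - p1 * ζ))) t := by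
    refine HasDerivAt.congr_of_eventuallyEq hQtilde ?_
    filter_upwards [hev] with s hs
    exact hQ s hs
  have hQder : HasDerivAt Q (P * (1 + Real.exp (q t))) t := by
    convert hQ' using 1
    rw [heq, hP, hA]
    field_simp [hn1.ne', hn2.ne, hd2.ne', hn2'.ne]
    ring
  exact ⟨hqneg, hqder, hpder, hQder⟩
end
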